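/- arXiv:2105.05439 — 4 statements merged into one kernel-verified Lean document; each statement's English description precedes it below -/
import Mathlib

section
/- The L¹ distance between two transport maps equals the L¹ distance between their generalized inverses: for all S,T∈𝒯, ∫_𝒮 |S(x)−T(x)| dx = ∫_𝒮 |S⁻¹(x)−T⁻¹(x)| dx. -/
open MeasureTheory ProbabilityTheory Filter Topology

noncomputable section

namespace ATM

/-- The space 𝒯 of transport maps on [s₁, s₂]: non-decreasing self-maps of
[s₁, s₂] fixing the endpoints. -/
def IsTransport (s₁ s₂ : ℝ) (T : ℝ → ℝ) : Prop :=
  MonotoneOn T (Set.Icc s₁ s₂) ∧ Set.MapsTo T (Set.Icc s₁ s₂) (Set.Icc s₁ s₂) ∧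
    T s₁ = s₁ ∧ T s₂ = s₂

/-- Generalized (left-continuous) inverse T⁻¹(x) = inf{y ∈ [s₁,s₂] : T(y) ≥ x}. -/
def geninv (s₁ s₂ : ℝ) (T : ℝ → ℝ) : ℝ → ℝ :=
  fun x => sInf {y | y ∈ Set.Icc s₁ s₂ ∧ x ≤ T y}

/-- L¹ distance d₁(S,T) = ∫_𝒮 |S-T| dλ. -/
def d1 (s₁ s₂ : ℝ) (S T : ℝ → ℝ) : ℝ := ∫ x in s₁..s₂, |S x - T x|

/-- L^q distance d_q(S,T) = (∫_𝒮 |S-T|^q dλ)^{1/q}. -/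
def dq (s₁ s₂ q : ℝ) (S T : ℝ → ℝ) : ℝ := (∫ x in s₁..s₂, |S x - T x| ^ q) ^ (1 / q)

/-- Sup distance d_∞(S,T) = sup_{x ∈ 𝒮} |S(x) - T(x)|. -/
def dinf (s₁ s₂ : ℝ) (S T : ℝ → ℝ) : ℝ := ⨆ x : Set.Icc s₁ s₂, |S x.1 - T x.1|

/-- Addition on 𝒯: T₁ ⊕ T₂ = T₂ ∘ T₁. -/
def oplus (T₁ T₂ : ℝ → ℝ) : ℝ → ℝ := T₂ ∘ T₁

/-- Scalar multiplication α ⊙ T for -1 ≤ α ≤ 1. -/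
def oneSmul (s₁ s₂ α : ℝ) (T : ℝ → ℝ) : ℝ → ℝ := fun x =>
  if 0 < α then x + α * (T x - x)
  else if α = 0 then x
  else x + α * (x - geninv s₁ s₂ T x)

/-- Scalar multiplication α ⊙ T for general α, via b = ⌊|α|⌋, a = |α| - b. -/
def odot (s₁ s₂ α : ℝ) (T : ℝ → ℝ) : ℝ → ℝ :=
  if |α| ≤ 1 then oneSmul s₁ s₂ α T
  else if 0 < α then (oneSmul s₁ s₂ (Int.fract α) T) ∘ T^[(⌊α⌋).toNat]
  else (oneSmul s₁ s₂ (Int.fract |α|) (geninv s₁ s₂ T)) ∘ (geninv s₁ s₂ T)^[(⌊|α|⌋).toNat]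

variable {Ω : Type*}

/-- φ_e(S) = α ⊙ S ⊕ e = e ∘ (α ⊙ S). -/
def phi (s₁ s₂ α : ℝ) (e S : ℝ → ℝ) : ℝ → ℝ := e ∘ odot s₁ s₂ α S

/-- Iterated random maps φ̃_{i,m}(S) = φ_{ε_i} ∘ ⋯ ∘ φ_{ε_{i-m+1}}(S). -/
def phiIter (s₁ s₂ α : ℝ) (ε : ℤ → Ω → ℝ → ℝ) : ℕ → ℤ → (ℝ → ℝ) → Ω → ℝ → ℝ
  | 0, _, S, _ => S
  | m + 1, i, S, ω => phi s₁ s₂ α (ε i ω) (phiIter s₁ s₂ α ε m (i - 1) S ω)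

/-- Concurrent scalar multiplication β ⊛ T for β : 𝒮 → [-1,1]. -/
def bsmul (s₁ s₂ : ℝ) (β T : ℝ → ℝ) : ℝ → ℝ := fun x =>
  if 0 < β x then x + β x * (T x - x)
  else if β x = 0 then x
  else x + β x * (x - geninv s₁ s₂ T x)

/-- φ_e(S) = β ⊛ S ⊕ e for the concurrent model. -/
def cphi (s₁ s₂ : ℝ) (β e S : ℝ → ℝ) : ℝ → ℝ := e ∘ bsmul s₁ s₂ β S

/-- Iterated random maps for the concurrent model. -/
def cphiIter (s₁ s₂ : ℝ) (β : ℝ → ℝ) (ε : ℤ → Ω → ℝ → ℝ) : ℕ → ℤ → (ℝ → ℝ) → Ω → ℝ → ℝ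
  | 0, _, S, _ => S
  | m + 1, i, S, ω => cphi s₁ s₂ β (ε i ω) (cphiIter s₁ s₂ β ε m (i - 1) S ω)

/-- The chain α_p ⊙ S₁ ⊕ α_{p-1} ⊙ S₂ ⊕ ⋯ ⊕ α₁ ⊙ S_p, where `a k` denotes α_{k+1}
and `S k` denotes S_{k+1} (0-based). Since A ⊕ B = B ∘ A, the map α_p ⊙ S₁ acts first. -/
def atmChain (s₁ s₂ : ℝ) {p : ℕ} (a : Fin p → ℝ) (S : Fin p → ℝ → ℝ) : ℝ → ℝ :=
  fun x => Fin.foldl p (fun y k => odot s₁ s₂ (a k.rev) (S k) y) x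

/-- Υ_e(𝐒) = (S₂, …, S_p, α_p ⊙ S₁ ⊕ ⋯ ⊕ α₁ ⊙ S_p ⊕ e). -/
def upsilon (s₁ s₂ : ℝ) {p : ℕ} (a : Fin p → ℝ) (e : ℝ → ℝ) (S : Fin p → ℝ → ℝ) :
    Fin p → ℝ → ℝ :=
  fun j => if h : (j : ℕ) + 1 < p then S ⟨(j : ℕ) + 1, h⟩ else e ∘ atmChain s₁ s₂ a S

/-- Iterated random maps Υ̃_{i,m}(𝐒) = Υ_{ε_i} ∘ ⋯ ∘ Υ_{ε_{i-m+1}}(𝐒). -/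
def upsilonIter (s₁ s₂ : ℝ) {p : ℕ} (a : Fin p → ℝ) (ε : ℤ → Ω → ℝ → ℝ) :
    ℕ → ℤ → (Fin p → ℝ → ℝ) → Ω → Fin p → ℝ → ℝ
  | 0, _, S, _ => S
  | m + 1, i, S, ω => upsilon s₁ s₂ a (ε i ω) (upsilonIter s₁ s₂ a ε m (i - 1) S ω)

/-- Product L^q metric on 𝒯^p. -/
def dqProd (s₁ s₂ q : ℝ) {p : ℕ} (S R : Fin p → ℝ → ℝ) : ℝ :=
  Real.sqrt (∑ k, (dq s₁ s₂ q (S k) (R k)) ^ 2)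

/-- Product L¹ metric on 𝒯^p. -/
def d1Prod (s₁ s₂ : ℝ) {p : ℕ} (S R : Fin p → ℝ → ℝ) : ℝ :=
  Real.sqrt (∑ k, (d1 s₁ s₂ (S k) (R k)) ^ 2)

/-- Joint measurability of a random function. -/
def JM [MeasurableSpace Ω] (f : Ω → ℝ → ℝ) : Prop :=
  Measurable fun q : Ω × ℝ => f q.1 q.2

/-- (ε_i)_{i ∈ ℤ} are i.i.d. random elements. -/
def IID [MeasurableSpace Ω] (P : Measure Ω) (ε : ℤ → Ω → ℝ → ℝ) : Prop :=
  iIndepFun ε P ∧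
    ∀ i j : ℤ, Measure.map (ε i) P = Measure.map (ε j) P

/-- Stationarity of a ℤ-indexed function-valued process: shift invariance of the joint law. -/
def Stationary [MeasurableSpace Ω] (P : Measure Ω) (X : ℤ → Ω → ℝ → ℝ) : Prop :=
  Measure.map (fun ω => fun i : ℤ => X (i + 1) ω) P =
    Measure.map (fun ω => fun i : ℤ => X i ω) P

/-- Completeness of a class of maps under the sup metric d_∞ on [s₁,s₂]. -/
def CompleteUnder (s₁ s₂ : ℝ) (TT : Set (ℝ → ℝ)) : Prop :=
  ∀ f : ℕ → ℝ → ℝ, (∀ n, f n ∈ TT) →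
    (∀ δ : ℝ, 0 < δ → ∃ N, ∀ m ≥ N, ∀ n ≥ N, dinf s₁ s₂ (f m) (f n) < δ) →
    ∃ g ∈ TT, Tendsto (fun n => dinf s₁ s₂ (f n) g) atTop (𝓝 0)

/-- Bi-Lipschitz with constant K on [s₁,s₂]. -/
def BiLipschitzOn (s₁ s₂ K : ℝ) (T : ℝ → ℝ) : Prop :=
  ∀ x ∈ Set.Icc s₁ s₂, ∀ y ∈ Set.Icc s₁ s₂,
    K⁻¹ * |x - y| ≤ |T x - T y| ∧ |T x - T y| ≤ K * |x - y|

/-- Empirical least-squares criterion l₊. -/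
def lplusD (s₁ s₂ : ℝ) (F : ℕ → ℝ → ℝ) (n : ℕ) (a : ℝ) : ℝ :=
  ∑ i ∈ Finset.Icc 2 n, ∫ x in s₁..s₂, (F i x - x - a * (F (i - 1) x - x)) ^ 2

/-- Empirical least-squares criterion l₋. -/
def lminusD (s₁ s₂ : ℝ) (F : ℕ → ℝ → ℝ) (n : ℕ) (a : ℝ) : ℝ :=
  ∑ i ∈ Finset.Icc 2 n, ∫ x in s₁..s₂,
    (F i x - x - a * (x - geninv s₁ s₂ (F (i - 1)) x)) ^ 2

/-- Empirical autocovariance ρ̂¹₊. -/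
def rho1pD (s₁ s₂ : ℝ) (F : ℕ → ℝ → ℝ) (n : ℕ) : ℝ :=
  (1 / ((n : ℝ) - 1)) * ∑ i ∈ Finset.Icc 2 n, ∫ x in s₁..s₂, (F i x - x) * (F (i - 1) x - x)

/-- Empirical autocovariance ρ̂¹₋. -/
def rho1mD (s₁ s₂ : ℝ) (F : ℕ → ℝ → ℝ) (n : ℕ) : ℝ :=
  (1 / ((n : ℝ) - 1)) * ∑ i ∈ Finset.Icc 2 n, ∫ x in s₁..s₂,
    (F i x - x) * (x - geninv s₁ s₂ (F (i - 1)) x)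

/-- Empirical second moment ρ̂⁰₊. -/
def rho0pD (s₁ s₂ : ℝ) (F : ℕ → ℝ → ℝ) (n : ℕ) : ℝ :=
  (1 / ((n : ℝ) - 1)) * ∑ i ∈ Finset.Icc 2 n, ∫ x in s₁..s₂, (F (i - 1) x - x) ^ 2

/-- Empirical second moment ρ̂⁰₋. -/
def rho0mD (s₁ s₂ : ℝ) (F : ℕ → ℝ → ℝ) (n : ℕ) : ℝ :=
  (1 / ((n : ℝ) - 1)) * ∑ i ∈ Finset.Icc 2 n, ∫ x in s₁..s₂,
    (x - geninv s₁ s₂ (F (i - 1)) x) ^ 2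

/-- Pointwise least-squares criterion l₊(·|x). -/
def lplusPt (F : ℕ → ℝ → ℝ) (n : ℕ) (x a : ℝ) : ℝ :=
  ∑ i ∈ Finset.Icc 2 n, (F i x - x - a * (F (i - 1) x - x)) ^ 2

/-- Pointwise least-squares criterion l₋(·|x). -/
def lminusPt (s₁ s₂ : ℝ) (F : ℕ → ℝ → ℝ) (n : ℕ) (x a : ℝ) : ℝ :=
  ∑ i ∈ Finset.Icc 2 n, (F i x - x - a * (x - geninv s₁ s₂ (F (i - 1)) x)) ^ 2

/-- Pointwise empirical autocovariance ρ̂¹₊(x). -/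
def rho1pPt (F : ℕ → ℝ → ℝ) (n : ℕ) (x : ℝ) : ℝ :=
  (1 / ((n : ℝ) - 1)) * ∑ i ∈ Finset.Icc 2 n, (F i x - x) * (F (i - 1) x - x)

/-- Pointwise empirical autocovariance ρ̂¹₋(x). -/
def rho1mPt (s₁ s₂ : ℝ) (F : ℕ → ℝ → ℝ) (n : ℕ) (x : ℝ) : ℝ :=
  (1 / ((n : ℝ) - 1)) * ∑ i ∈ Finset.Icc 2 n, (F i x - x) * (x - geninv s₁ s₂ (F (i - 1)) x)

/-- Pointwise empirical second moment ρ̂⁰₊(x). -/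
def rho0pPt (F : ℕ → ℝ → ℝ) (n : ℕ) (x : ℝ) : ℝ :=
  (1 / ((n : ℝ) - 1)) * ∑ i ∈ Finset.Icc 2 n, (F (i - 1) x - x) ^ 2

/-- Pointwise empirical second moment ρ̂⁰₋(x). -/
def rho0mPt (s₁ s₂ : ℝ) (F : ℕ → ℝ → ℝ) (n : ℕ) (x : ℝ) : ℝ :=
  (1 / ((n : ℝ) - 1)) * ∑ i ∈ Finset.Icc 2 n, (x - geninv s₁ s₂ (F (i - 1)) x) ^ 2


open scoped ENNReal

section Aux
variable {s₁ s₂ : ℝ} {S T : ℝ → ℝ}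
private def clampI (s₁ s₂ x : ℝ) : ℝ := max s₁ (min x s₂)
private lemma clampI_mem (hs : s₁ ≤ s₂) (x : ℝ) : clampI s₁ s₂ x ∈ Set.Icc s₁ s₂ :=
  ⟨le_max_left _ _, max_le hs (min_le_right _ _)⟩
private lemma clampI_mono : Monotone (clampI s₁ s₂) := fun _ _ h =>
  max_le_max le_rfl (min_le_min h le_rfl)
private lemma clampI_eq {x : ℝ} (hx : x ∈ Set.Icc s₁ s₂) : clampI s₁ s₂ x = x := by
  simp [clampI, min_eq_left hx.2, max_eq_right hx.1]
private lemma gset_bdd (t : ℝ) : BddBelow {y | y ∈ Set.Icc s₁ s₂ ∧ t ≤ T y} :=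
  ⟨s₁, fun y hy => hy.1.1⟩
private lemma gset_nonempty (hT : IsTransport s₁ s₂ T) (hs : s₁ ≤ s₂) {t : ℝ} (ht : t ≤ s₂) :
    Set.Nonempty {y | y ∈ Set.Icc s₁ s₂ ∧ t ≤ T y} :=
  ⟨s₂, Set.right_mem_Icc.2 hs, by rw [hT.2.2.2]; exact ht⟩
private lemma geninv_mem (hT : IsTransport s₁ s₂ T) (hs : s₁ ≤ s₂) {t : ℝ} (ht : t ≤ s₂) :
    geninv s₁ s₂ T t ∈ Set.Icc s₁ s₂ :=
  ⟨le_csInf (gset_nonempty hT hs ht) fun y hy => hy.1.1,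
   csInf_le (gset_bdd t) ⟨Set.right_mem_Icc.2 hs, by rw [hT.2.2.2]; exact ht⟩⟩
private lemma geninv_le (hT : IsTransport s₁ s₂ T) {t x : ℝ} (hx : x ∈ Set.Icc s₁ s₂)
    (h : t ≤ T x) : geninv s₁ s₂ T t ≤ x := csInf_le (gset_bdd t) ⟨hx, h⟩
private lemma le_of_geninv_lt (hT : IsTransport s₁ s₂ T) (hs : s₁ ≤ s₂) {t x : ℝ}
    (ht : t ≤ s₂) (hx : x ∈ Set.Icc s₁ s₂) (h : geninv s₁ s₂ T t < x) : t ≤ T x := by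
  obtain ⟨y, hy, hyx⟩ := exists_lt_of_csInf_lt (gset_nonempty hT hs ht) h
  exact hy.2.trans (hT.1 hy.1 hx hyx.le)
private lemma geninv_mono (hT : IsTransport s₁ s₂ T) (hs : s₁ ≤ s₂) {t u : ℝ}
    (htu : t ≤ u) (hu : u ≤ s₂) : geninv s₁ s₂ T t ≤ geninv s₁ s₂ T u :=
  csInf_le_csInf (gset_bdd t) (gset_nonempty hT hs hu) fun y hy => ⟨hy.1, htu.trans hy.2⟩
private lemma volume_slice (hT : IsTransport s₁ s₂ T) (hs : s₁ ≤ s₂) {t : ℝ}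
    (ht : t ∈ Set.Icc s₁ s₂) :
    volume {x | x ∈ Set.Icc s₁ s₂ ∧ t ≤ T x} = ENNReal.ofReal (s₂ - geninv s₁ s₂ T t) := by
  have hgm := geninv_mem hT hs ht.2
  apply le_antisymm
  · calc volume {x | x ∈ Set.Icc s₁ s₂ ∧ t ≤ T x}
        ≤ volume (Set.Icc (geninv s₁ s₂ T t) s₂) :=
          measure_mono fun x hx => ⟨geninv_le hT hx.1 hx.2, hx.1.2⟩
      _ = ENNReal.ofReal (s₂ - geninv s₁ s₂ T t) := Real.volume_Icc
  · calc ENNReal.ofReal (s₂ - geninv s₁ s₂ T t)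
        = volume (Set.Ioc (geninv s₁ s₂ T t) s₂) := Real.volume_Ioc.symm
      _ ≤ volume {x | x ∈ Set.Icc s₁ s₂ ∧ t ≤ T x} := by
          refine measure_mono fun x hx => ?_
          have hxI : x ∈ Set.Icc s₁ s₂ := ⟨hgm.1.trans hx.1.le, hx.2⟩
          exact ⟨hxI, le_of_geninv_lt hT hs ht.2 hxI hx.1⟩

private lemma key_integral (hs : s₁ < s₂) (hT : IsTransport s₁ s₂ T) :
    ∫ x in Set.Icc s₁ s₂, (T x - s₁) = ∫ t in Set.Icc s₁ s₂, (s₂ - geninv s₁ s₂ T t) := by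
  set eT : ℝ → ℝ := fun x => T (clampI s₁ s₂ x) with heT
  set eg : ℝ → ℝ := fun t => geninv s₁ s₂ T (clampI s₁ s₂ t) with heg
  have hmT : Monotone eT := fun x y h =>
    hT.1 (clampI_mem hs.le x) (clampI_mem hs.le y) (clampI_mono h)
  have hmg : Monotone eg := fun x y h =>
    geninv_mono hT hs.le (clampI_mono h) (clampI_mem hs.le y).2
  have heTmem : ∀ x, eT x ∈ Set.Icc s₁ s₂ := fun x => hT.2.1 (clampI_mem hs.le x)
  have hegmem : ∀ t, eg t ∈ Set.Icc s₁ s₂ := fun t => geninv_mem hT hs.le (clampI_mem hs.le t).2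
  have step1 : ∫ x in Set.Icc s₁ s₂, (T x - s₁) = ∫ x in Set.Icc s₁ s₂, (eT x - s₁) :=
    setIntegral_congr_fun measurableSet_Icc fun x hx => by
      simp only [heT, clampI_eq hx]
  have step5 : ∫ t in Set.Icc s₁ s₂, (s₂ - geninv s₁ s₂ T t)
      = ∫ t in Set.Icc s₁ s₂, (s₂ - eg t) :=
    setIntegral_congr_fun measurableSet_Icc fun t ht => by
      simp only [heg, clampI_eq ht]
  rw [step1, step5]
  have h2 : ∫ x in Set.Icc s₁ s₂, (eT x - s₁) =
      (∫⁻ x in Set.Icc s₁ s₂, ENNReal.ofReal (eT x - s₁)).toReal :=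
    integral_eq_lintegral_of_nonneg_ae (ae_of_all _ fun x => sub_nonneg.2 (heTmem x).1)
      (hmT.measurable.sub measurable_const).aestronglyMeasurable
  have h6 : ∫ t in Set.Icc s₁ s₂, (s₂ - eg t) =
      (∫⁻ t in Set.Icc s₁ s₂, ENNReal.ofReal (s₂ - eg t)).toReal :=
    integral_eq_lintegral_of_nonneg_ae (ae_of_all _ fun t => sub_nonneg.2 (hegmem t).2)
      (measurable_const.sub hmg.measurable).aestronglyMeasurable
  rw [h2, h6]
  congr 1
  have hset : MeasurableSet {p : ℝ × ℝ | p.2 ≤ eT p.1} :=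
    measurableSet_le measurable_snd (hmT.measurable.comp measurable_fst)
  set f : ℝ → ℝ → ℝ≥0∞ := fun x t => ({p : ℝ × ℝ | p.2 ≤ eT p.1}).indicator 1 (x, t) with hf
  have hfm : AEMeasurable (Function.uncurry f)
      ((volume.restrict (Set.Icc s₁ s₂)).prod (volume.restrict (Set.Icc s₁ s₂))) := by
    have huc : Function.uncurry f = ({p : ℝ × ℝ | p.2 ≤ eT p.1}).indicator 1 := by
      funext p; cases p; rfl
    rw [huc]
    exact (measurable_one.indicator hset).aemeasurable
  have inner1 : ∀ x, (∫⁻ t in Set.Icc s₁ s₂, f x t) = ENNReal.ofReal (eT x - s₁) := by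
    intro x
    have hfx : (fun t => f x t) = (Set.Iic (eT x)).indicator 1 := by
      funext t
      simp only [hf, Set.indicator_apply, Set.mem_setOf_eq, Set.mem_Iic, Pi.one_apply]
    rw [hfx, lintegral_indicator_one measurableSet_Iic,
      Measure.restrict_apply measurableSet_Iic]
    have hseteq : Set.Iic (eT x) ∩ Set.Icc s₁ s₂ = Set.Icc s₁ (eT x) := by
      ext t
      constructor
      · rintro ⟨h1, h2, _⟩; exact ⟨h2, h1⟩
      · rintro ⟨h1, h2⟩; exact ⟨h2, h1, h2.trans (heTmem x).2⟩
    rw [hseteq, Real.volume_Icc]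
  have inner2 : ∀ t ∈ Set.Icc s₁ s₂,
      (∫⁻ x in Set.Icc s₁ s₂, f x t) = ENNReal.ofReal (s₂ - eg t) := by
    intro t ht
    have hmeas : MeasurableSet {x : ℝ | t ≤ eT x} :=
      measurableSet_le measurable_const hmT.measurable
    have hfx : (fun x => f x t) = ({x : ℝ | t ≤ eT x}).indicator 1 := by
      funext x; simp only [hf, Set.indicator_apply, Set.mem_setOf_eq, Pi.one_apply]
    rw [hfx, lintegral_indicator_one hmeas, Measure.restrict_apply hmeas]
    have hseteq : {x : ℝ | t ≤ eT x} ∩ Set.Icc s₁ s₂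
        = {x | x ∈ Set.Icc s₁ s₂ ∧ t ≤ T x} := by
      ext x
      simp only [Set.mem_inter_iff, Set.mem_setOf_eq]
      constructor
      · rintro ⟨h1, h2⟩
        exact ⟨h2, by simpa only [heT, clampI_eq h2] using h1⟩
      · rintro ⟨h1, h2⟩
        exact ⟨by simp only [heT]; rw [clampI_eq h1]; exact h2, h1⟩
    rw [hseteq, volume_slice hT hs.le ht]
    simp [heg, clampI_eq ht]
  calc ∫⁻ x in Set.Icc s₁ s₂, ENNReal.ofReal (eT x - s₁)
      = ∫⁻ x in Set.Icc s₁ s₂, ∫⁻ t in Set.Icc s₁ s₂, f x t :=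
        lintegral_congr fun x => (inner1 x).symm
    _ = ∫⁻ t in Set.Icc s₁ s₂, ∫⁻ x in Set.Icc s₁ s₂, f x t := lintegral_lintegral_swap hfm
    _ = ∫⁻ t in Set.Icc s₁ s₂, ENNReal.ofReal (s₂ - eg t) :=
        setLIntegral_congr_fun measurableSet_Icc inner2

end Aux

section Aux2
variable {s₁ s₂ : ℝ} {S T : ℝ → ℝ}

private lemma isTransport_max (hS : IsTransport s₁ s₂ S) (hT : IsTransport s₁ s₂ T) :
    IsTransport s₁ s₂ (fun x => max (S x) (T x)) :=
  ⟨fun x hx y hy h => max_le_max (hS.1 hx hy h) (hT.1 hx hy h),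
   fun x hx => ⟨le_max_of_le_left (hS.2.1 hx).1, max_le (hS.2.1 hx).2 (hT.2.1 hx).2⟩,
   by simp [hS.2.2.1, hT.2.2.1], by simp [hS.2.2.2, hT.2.2.2]⟩

private lemma isTransport_min (hS : IsTransport s₁ s₂ S) (hT : IsTransport s₁ s₂ T) :
    IsTransport s₁ s₂ (fun x => min (S x) (T x)) :=
  ⟨fun x hx y hy h => min_le_min (hS.1 hx hy h) (hT.1 hx hy h),
   fun x hx => ⟨le_min (hS.2.1 hx).1 (hT.2.1 hx).1, min_le_of_left_le (hS.2.1 hx).2⟩,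
   by simp [hS.2.2.1, hT.2.2.1], by simp [hS.2.2.2, hT.2.2.2]⟩

private lemma geninv_max (hS : IsTransport s₁ s₂ S) (hT : IsTransport s₁ s₂ T)
    (hs : s₁ ≤ s₂) {t : ℝ} (ht : t ≤ s₂) :
    geninv s₁ s₂ (fun x => max (S x) (T x)) t
      = min (geninv s₁ s₂ S t) (geninv s₁ s₂ T t) := by
  have hset : {y | y ∈ Set.Icc s₁ s₂ ∧ t ≤ max (S y) (T y)} =
      {y | y ∈ Set.Icc s₁ s₂ ∧ t ≤ S y} ∪ {y | y ∈ Set.Icc s₁ s₂ ∧ t ≤ T y} := by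
    ext y
    simp only [Set.mem_setOf_eq, Set.mem_union, le_max_iff]
    tauto
  show sInf _ = _
  rw [hset, csInf_union (gset_bdd t) (gset_nonempty hS hs ht) (gset_bdd t)
    (gset_nonempty hT hs ht)]
  rfl

private lemma geninv_min (hS : IsTransport s₁ s₂ S) (hT : IsTransport s₁ s₂ T)
    (hs : s₁ ≤ s₂) {t : ℝ} (ht : t ≤ s₂) :
    geninv s₁ s₂ (fun x => min (S x) (T x)) t
      = max (geninv s₁ s₂ S t) (geninv s₁ s₂ T t) := by
  set m := max (geninv s₁ s₂ S t) (geninv s₁ s₂ T t) with hm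
  have hSm := geninv_mem hS hs ht
  have hTm := geninv_mem hT hs ht
  have hmmem : m ∈ Set.Icc s₁ s₂ := ⟨le_max_of_le_left hSm.1, max_le hSm.2 hTm.2⟩
  have hCsub : ∀ y, y ∈ {y | y ∈ Set.Icc s₁ s₂ ∧ t ≤ min (S y) (T y)} →
      y ∈ {y | y ∈ Set.Icc s₁ s₂ ∧ t ≤ S y} := fun y hy => ⟨hy.1, hy.2.trans (min_le_left _ _)⟩
  have hCsub' : ∀ y, y ∈ {y | y ∈ Set.Icc s₁ s₂ ∧ t ≤ min (S y) (T y)} →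
      y ∈ {y | y ∈ Set.Icc s₁ s₂ ∧ t ≤ T y} := fun y hy => ⟨hy.1, hy.2.trans (min_le_right _ _)⟩
  have hCne : Set.Nonempty {y | y ∈ Set.Icc s₁ s₂ ∧ t ≤ min (S y) (T y)} :=
    ⟨s₂, Set.right_mem_Icc.2 hs, by
      show t ≤ min (S s₂) (T s₂); rw [hS.2.2.2, hT.2.2.2, min_self]; exact ht⟩
  apply le_antisymm
  · rcases lt_or_eq_of_le hmmem.2 with h | h
    · have hIoc : Set.Ioc m s₂ ⊆ {y | y ∈ Set.Icc s₁ s₂ ∧ t ≤ min (S y) (T y)} := by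
        intro x hx
        have hxI : x ∈ Set.Icc s₁ s₂ := ⟨hmmem.1.trans hx.1.le, hx.2⟩
        refine ⟨hxI, le_min ?_ ?_⟩
        · exact le_of_geninv_lt hS hs ht hxI (lt_of_le_of_lt (le_max_left _ _) hx.1)
        · exact le_of_geninv_lt hT hs ht hxI (lt_of_le_of_lt (le_max_right _ _) hx.1)
      calc geninv s₁ s₂ (fun x => min (S x) (T x)) t
          ≤ sInf (Set.Ioc m s₂) := csInf_le_csInf (gset_bdd t) ⟨s₂, Set.right_mem_Ioc.2 h⟩ hIoc
        _ = m := csInf_Ioc h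
    · exact le_trans (csInf_le (gset_bdd t)
        ⟨Set.right_mem_Icc.2 hs, by
          show t ≤ min (S s₂) (T s₂); rw [hS.2.2.2, hT.2.2.2, min_self]; exact ht⟩) h.ge
  · exact max_le (csInf_le_csInf (gset_bdd t) hCne hCsub)
      (csInf_le_csInf (gset_bdd t) hCne hCsub')


/-- The L¹ distance between two transport maps equals the L¹ distance between their
generalized inverses. -/
theorem l1_distance_geninv (s₁ s₂ : ℝ) (hs : s₁ < s₂) (S T : ℝ → ℝ)
    (hS : IsTransport s₁ s₂ S) (hT : IsTransport s₁ s₂ T) :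
    (∫ x in s₁..s₂, |S x - T x|) =
      ∫ x in s₁..s₂, |geninv s₁ s₂ S x - geninv s₁ s₂ T x| := by
  have hMt := isTransport_max hS hT
  have hmt := isTransport_min hS hT
  have hMint : IntegrableOn (fun x => max (S x) (T x) - s₁) (Set.Icc s₁ s₂) :=
    (MonotoneOn.integrableOn_isCompact isCompact_Icc hMt.1).sub
      (integrableOn_const measure_Icc_lt_top.ne)
  have hmint : IntegrableOn (fun x => min (S x) (T x) - s₁) (Set.Icc s₁ s₂) :=
    (MonotoneOn.integrableOn_isCompact isCompact_Icc hmt.1).sub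
      (integrableOn_const measure_Icc_lt_top.ne)
  have hgMmono : MonotoneOn (geninv s₁ s₂ (fun x => max (S x) (T x))) (Set.Icc s₁ s₂) :=
    fun t _ u hu htu => geninv_mono hMt hs.le htu hu.2
  have hgmmono : MonotoneOn (geninv s₁ s₂ (fun x => min (S x) (T x))) (Set.Icc s₁ s₂) :=
    fun t _ u hu htu => geninv_mono hmt hs.le htu hu.2
  have hgMint : IntegrableOn (fun t => s₂ - geninv s₁ s₂ (fun x => max (S x) (T x)) t)
      (Set.Icc s₁ s₂) :=
    (integrableOn_const measure_Icc_lt_top.ne).sub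
      (MonotoneOn.integrableOn_isCompact isCompact_Icc hgMmono)
  have hgmint : IntegrableOn (fun t => s₂ - geninv s₁ s₂ (fun x => min (S x) (T x)) t)
      (Set.Icc s₁ s₂) :=
    (integrableOn_const measure_Icc_lt_top.ne).sub
      (MonotoneOn.integrableOn_isCompact isCompact_Icc hgmmono)
  rw [intervalIntegral.integral_of_le hs.le, intervalIntegral.integral_of_le hs.le,
    ← MeasureTheory.integral_Icc_eq_integral_Ioc, ← MeasureTheory.integral_Icc_eq_integral_Ioc]
  calc ∫ x in Set.Icc s₁ s₂, |S x - T x|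
      = ∫ x in Set.Icc s₁ s₂, ((max (S x) (T x) - s₁) - (min (S x) (T x) - s₁)) := by
        refine setIntegral_congr_fun measurableSet_Icc fun x _ => ?_
        rw [← max_sub_min_eq_abs, max_comm, min_comm]; ring
    _ = (∫ x in Set.Icc s₁ s₂, (max (S x) (T x) - s₁))
          - ∫ x in Set.Icc s₁ s₂, (min (S x) (T x) - s₁) := integral_sub hMint hmint
    _ = (∫ t in Set.Icc s₁ s₂, (s₂ - geninv s₁ s₂ (fun x => max (S x) (T x)) t))
          - ∫ t in Set.Icc s₁ s₂, (s₂ - geninv s₁ s₂ (fun x => min (S x) (T x)) t) := by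
        rw [key_integral hs hMt, key_integral hs hmt]
    _ = ∫ t in Set.Icc s₁ s₂, ((s₂ - geninv s₁ s₂ (fun x => max (S x) (T x)) t)
          - (s₂ - geninv s₁ s₂ (fun x => min (S x) (T x)) t)) :=
        (integral_sub hgMint hgmint).symm
    _ = ∫ t in Set.Icc s₁ s₂, |geninv s₁ s₂ S t - geninv s₁ s₂ T t| := by
        refine setIntegral_congr_fun measurableSet_Icc fun t ht => ?_
        rw [geninv_max hS hT hs.le ht.2, geninv_min hS hT hs.le ht.2,
          ← max_sub_min_eq_abs, max_comm, min_comm]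
        ring

end Aux2
end ATM
end
end

section
/- Moment identification of the ATM(1) coefficient: let (T_i) be a stationary sequence of random elements of 𝒯 satisfying T_{i+1} = α⊙T_i ⊕ ε_{i+1} with 0≤α≤1, where ε_{i+1} is a random element of 𝒯 (jointly measurable) independent of T_i and with E[ε_{i+1}(y)] = y for all y∈𝒮. Then ∫_𝒮 E[(T_{i+1}(x)−x)(T_i(x)−x)] dx = α·∫_𝒮 E[(T_i(x)−x)²] dx; in particular, if ∫_𝒮 E[(T_i(x)−x)²] dx > 0 then α = ∫_𝒮 E[(T_{i+1}(x)−x)(T_i(x)−x)] dx / ∫_𝒮 E[(T_i(x)−x)²] dx. -/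
open MeasureTheory ProbabilityTheory Filter Topology

noncomputable section

namespace ATM

variable {Ω : Type*}

lemma odot_eval {s₁ s₂ α : ℝ} (h0 : 0 ≤ α) (h1 : α ≤ 1) (S : ℝ → ℝ) (x : ℝ) :
    odot s₁ s₂ α S x = x + α * (S x - x) := by
  have habs : |α| ≤ 1 := abs_le.mpr ⟨by linarith, h1⟩
  rcases eq_or_lt_of_le h0 with h | h
  · simp [odot, oneSmul, habs, ← h]
  · simp [odot, oneSmul, habs, h]

lemma integrable_bdd {Ω : Type*} [MeasurableSpace Ω] {P : Measure Ω} [IsProbabilityMeasure P]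
    {f : Ω → ℝ} (M : ℝ) (hf : Measurable f) (hb : ∀ ω, |f ω| ≤ M) : Integrable f P :=
  (integrable_const M).mono' hf.aestronglyMeasurable
    (Filter.Eventually.of_forall (by simpa [Real.norm_eq_abs] using hb))

/-- Moment identification of the ATM(1) coefficient: for a stationary sequence satisfying
T_{i+1} = α ⊙ T_i ⊕ ε_{i+1} with 0 ≤ α ≤ 1, innovation independent of T_i and with
identity mean, ∫_𝒮 E[(T_{i+1}(x)-x)(T_i(x)-x)]dx = α ∫_𝒮 E[(T_i(x)-x)²]dx; in particular
α is identified as the corresponding ratio whenever the denominator is positive. -/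
theorem atm1_moment_identification
    {Ω : Type*} [MeasurableSpace Ω] (P : Measure Ω) [IsProbabilityMeasure P]
    (s₁ s₂ : ℝ) (hs : s₁ < s₂) (α : ℝ) (hα : α ∈ Set.Icc (0 : ℝ) 1)
    (T ε : ℤ → Ω → ℝ → ℝ)
    (hTmeas : ∀ i, JM (T i)) (hεmeas : ∀ i, JM (ε i))
    (hT : ∀ i ω, IsTransport s₁ s₂ (T i ω)) (hε : ∀ i ω, IsTransport s₁ s₂ (ε i ω))
    (hstat : Stationary P T)
    (hrec : ∀ (i : ℤ) (ω : Ω), T (i + 1) ω = phi s₁ s₂ α (ε (i + 1) ω) (T i ω))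
    (hindep : ∀ i : ℤ, IndepFun (T i) (ε (i + 1)) P)
    (hmean : ∀ (i : ℤ), ∀ y ∈ Set.Icc s₁ s₂, (∫ ω, ε i ω y ∂P) = y) :
    ∀ i : ℤ,
      (∫ x in s₁..s₂, ∫ ω, (T (i + 1) ω x - x) * (T i ω x - x) ∂P) =
        α * ∫ x in s₁..s₂, ∫ ω, (T i ω x - x) ^ 2 ∂P ∧
      ((0 < ∫ x in s₁..s₂, ∫ ω, (T i ω x - x) ^ 2 ∂P) →
        α = (∫ x in s₁..s₂, ∫ ω, (T (i + 1) ω x - x) * (T i ω x - x) ∂P) /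
            (∫ x in s₁..s₂, ∫ ω, (T i ω x - x) ^ 2 ∂P)) := by
  obtain ⟨hα0, hα1⟩ := hα
  intro i
  have hεc : ∀ c : ℝ, Measurable fun ω => ε (i+1) ω c := fun c =>
    (hεmeas (i+1)).comp (measurable_id.prodMk measurable_const)
  have key : Set.EqOn (fun x => ∫ ω, (T (i + 1) ω x - x) * (T i ω x - x) ∂P)
      (fun x => α * ∫ ω, (T i ω x - x) ^ 2 ∂P) (Set.uIcc s₁ s₂) := by
    rw [Set.uIcc_of_le hs.le]
    intro x hx
    dsimp only
    set X : Ω → ℝ := fun ω => T i ω x with hXdef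
    have hXmeas : Measurable X := (hTmeas i).comp (measurable_id.prodMk measurable_const)
    have hXmem : ∀ ω, X ω ∈ Set.Icc s₁ s₂ := fun ω => (hT i ω).2.1 hx
    set y : ℝ → ℝ := fun t => x + α * (t - x) with hydef
    have hymeas : Measurable y := by fun_prop
    have hymem : ∀ t ∈ Set.Icc s₁ s₂, y t ∈ Set.Icc s₁ s₂ := by
      intro t ht
      obtain ⟨a1, a2⟩ := ht
      obtain ⟨b1, b2⟩ := hx
      constructor <;> simp only [hydef] <;> nlinarith
    have hYmem : ∀ ω, y (X ω) ∈ Set.Icc s₁ s₂ := fun ω => hymem _ (hXmem ω)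
    have hTx : ∀ ω, T (i+1) ω x = ε (i+1) ω (y (X ω)) := by
      intro ω
      rw [hrec i ω]
      simp only [phi, Function.comp_apply, odot_eval hα0 hα1]
      rfl
    have hT1meas : Measurable fun ω => T (i+1) ω x :=
      (hTmeas (i+1)).comp (measurable_id.prodMk measurable_const)
    have hT1mem : ∀ ω, T (i+1) ω x ∈ Set.Icc s₁ s₂ := fun ω => (hT (i+1) ω).2.1 hx
    set M₀ : ℝ := |s₁| + |s₂| with hM₀def
    have hM₀0 : (0:ℝ) ≤ M₀ := by positivity
    have habsIcc : ∀ v ∈ Set.Icc s₁ s₂, |v| ≤ M₀ := by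
      intro v hv
      rw [abs_le]
      refine ⟨?_, ?_⟩
      · have h1 := neg_abs_le s₁
        have h2 := abs_nonneg s₂
        simp only [hM₀def]
        linarith [hv.1]
      · have h1 := le_abs_self s₂
        have h2 := abs_nonneg s₁
        simp only [hM₀def]
        linarith [hv.2]
    have star : ∀ c ∈ Set.Icc s₁ s₂, ∀ u : ℝ → ℝ, Measurable u →
        ∫ ω, ε (i+1) ω c * u (X ω) ∂P = c * ∫ ω, u (X ω) ∂P := by
      intro c hc u hu
      have hind : IndepFun (fun ω => ε (i+1) ω c) (fun ω => u (X ω)) P :=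
        ((hindep i).comp (hu.comp (measurable_pi_apply x)) (measurable_pi_apply c)).symm
      rw [hind.integral_fun_mul_eq_mul_integral (hεc c).aestronglyMeasurable (hu.comp hXmeas).aestronglyMeasurable,
        hmean (i+1) c hc]
    have L : ∀ h : ℝ → ℝ, Measurable h → (∀ t, 0 ≤ h t) → (∀ t, h t ≤ s₂ - s₁) →
        ∫ ω, T (i+1) ω x * h (X ω) ∂P = ∫ ω, y (X ω) * h (X ω) ∂P := by
      intro h hh h0 hb
      have habs : ∀ t, |h t| ≤ s₂ - s₁ := fun t => abs_le.mpr ⟨by linarith [h0 t, hb t], hb t⟩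
      have hhX : Measurable fun ω => h (X ω) := hh.comp hXmeas
      have hIA : Integrable (fun ω => T (i+1) ω x * h (X ω)) P :=
        integrable_bdd (M₀ * (s₂ - s₁)) (hT1meas.mul hhX) (fun ω => by
          rw [abs_mul]
          exact mul_le_mul (habsIcc _ (hT1mem ω)) (habs _) (abs_nonneg _) hM₀0)
      have hIB : Integrable (fun ω => y (X ω) * h (X ω)) P :=
        integrable_bdd (M₀ * (s₂ - s₁)) ((hymeas.comp hXmeas).mul hhX) (fun ω => by
          rw [abs_mul]
          exact mul_le_mul (habsIcc _ (hYmem ω)) (habs _) (abs_nonneg _) hM₀0)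
      have hIh : Integrable (fun ω => h (X ω)) P := integrable_bdd (s₂ - s₁) hhX (fun ω => habs _)
      have hinth_le : ∫ ω, h (X ω) ∂P ≤ s₂ - s₁ := by
        calc ∫ ω, h (X ω) ∂P ≤ ∫ _ω, (s₂ - s₁) ∂P :=
              integral_mono hIh (integrable_const _) (fun ω => hb _)
        _ = s₂ - s₁ := by simp
      have hinth_0 : 0 ≤ ∫ ω, h (X ω) ∂P := integral_nonneg (fun ω => h0 _)
      set A := ∫ ω, T (i+1) ω x * h (X ω) ∂P with hA
      set B := ∫ ω, y (X ω) * h (X ω) ∂P with hB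
      have main : ∀ d : ℝ, 0 < d → A ≤ B + d * (s₂ - s₁) ∧ B ≤ A + d * (s₂ - s₁) := by
        intro d hd
        set N : ℕ := ⌈(s₂ - s₁)/d⌉₊ with hN
        set c : ℕ → ℝ := fun k => s₁ + k * d with hc
        set u : ℕ → ℝ → ℝ := fun k t => if y t ∈ Set.Ico (c k) (c k + d) then h t else 0 with hu
        have humeas : ∀ k, Measurable (u k) := fun k =>
          Measurable.ite (hymeas measurableSet_Ico) hh measurable_const
        have hub : ∀ k t, |u k t| ≤ s₂ - s₁ := by
          intro k t
          simp only [hu]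
          split_ifs
          · exact habs t
          · simp only [abs_zero]
            linarith
        set k₀ : Ω → ℕ := fun ω => ⌊(y (X ω) - s₁)/d⌋₊ with hk₀
        have hk₀le : ∀ ω, k₀ ω ≤ N := by
          intro ω
          refine le_trans (Nat.floor_le_floor ?_) (Nat.floor_le_ceil _)
          have h2 := (hYmem ω).2
          gcongr
        have hmemk : ∀ ω, c (k₀ ω) ≤ y (X ω) ∧ y (X ω) < c (k₀ ω) + d := by
          intro ω
          obtain ⟨m1, m2⟩ := hYmem ω
          constructor
          · have h1 : ((k₀ ω : ℕ) : ℝ) ≤ (y (X ω) - s₁)/d :=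
              Nat.floor_le (div_nonneg (by linarith) hd.le)
            have h2 := (le_div_iff₀ hd).mp h1
            simp only [hc]
            linarith
          · have h2 : (y (X ω) - s₁)/d < (k₀ ω : ℕ) + 1 := Nat.lt_floor_add_one _
            have h3 := (div_lt_iff₀ hd).mp h2
            simp only [hc]
            nlinarith
        have huval : ∀ ω, u (k₀ ω) (X ω) = h (X ω) := by
          intro ω
          simp only [hu]
          rw [if_pos (Set.mem_Ico.mpr ⟨(hmemk ω).1, (hmemk ω).2⟩)]
        have huzero : ∀ ω k, k ≠ k₀ ω → u k (X ω) = 0 := by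
          intro ω k hne
          simp only [hu]
          rw [if_neg]
          intro hmem
          obtain ⟨q1, q2⟩ := Set.mem_Ico.mp hmem
          obtain ⟨p1, p2⟩ := hmemk ω
          rcases lt_or_gt_of_ne hne with hlt | hgt
          · have hcast : ((k:ℝ) + 1) ≤ ((k₀ ω : ℕ) : ℝ) := by exact_mod_cast hlt
            simp only [hc] at q1 q2 p1 p2
            nlinarith
          · have hcast : (((k₀ ω : ℕ) : ℝ) + 1) ≤ (k:ℝ) := by exact_mod_cast hgt
            simp only [hc] at q1 q2 p1 p2
            nlinarith
        have hsum : ∀ (g : ℕ → ℝ) ω,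
            (∑ k ∈ Finset.range (N+1), g k * u k (X ω)) = g (k₀ ω) * h (X ω) := by
          intro g ω
          rw [Finset.sum_eq_single (k₀ ω)]
          · rw [huval]
          · intro k _ hne
            rw [huzero ω k hne, mul_zero]
          · intro hnm
            exact absurd (Finset.mem_range.mpr (Nat.lt_succ_of_le (hk₀le ω))) hnm
        set m : ℕ → ℝ := fun k => min (c k + d) s₂ with hm
        set m' : ℕ → ℝ := fun k => min (c k) s₂ with hm'
        have hcs₁ : ∀ k : ℕ, s₁ ≤ c k := by
          intro k
          simp only [hc]
          have : (0:ℝ) ≤ (k:ℝ) * d := by positivity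
          linarith
        have hmIcc : ∀ k, m k ∈ Set.Icc s₁ s₂ :=
          fun k => ⟨le_min (by linarith [hcs₁ k]) hs.le, min_le_right _ _⟩
        have hm'Icc : ∀ k, m' k ∈ Set.Icc s₁ s₂ :=
          fun k => ⟨le_min (hcs₁ k) hs.le, min_le_right _ _⟩
        have hIterm : ∀ (v : ℕ → ℝ), (∀ k, v k ∈ Set.Icc s₁ s₂) → ∀ k,
            Integrable (fun ω => ε (i+1) ω (v k) * u k (X ω)) P := by
          intro v hv k
          exact integrable_bdd (M₀ * (s₂ - s₁)) ((hεc _).mul ((humeas k).comp hXmeas))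
            (fun ω => by
              rw [abs_mul]
              exact mul_le_mul (habsIcc _ ((hε (i+1) ω).2.1 (hv k))) (hub k _) (abs_nonneg _) hM₀0)
        have hIterm' : ∀ (v : ℕ → ℝ), (∀ k, v k ∈ Set.Icc s₁ s₂) → ∀ k,
            Integrable (fun ω => v k * u k (X ω)) P := by
          intro v hv k
          exact integrable_bdd (M₀ * (s₂ - s₁)) (measurable_const.mul ((humeas k).comp hXmeas))
            (fun ω => by
              rw [abs_mul]
              exact mul_le_mul (habsIcc _ (hv k)) (hub k _) (abs_nonneg _) hM₀0)
        have hchain : ∀ (v : ℕ → ℝ), (∀ k, v k ∈ Set.Icc s₁ s₂) →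
            ∫ ω, ε (i+1) ω (v (k₀ ω)) * h (X ω) ∂P = ∫ ω, v (k₀ ω) * h (X ω) ∂P := by
          intro v hv
          have e1 : ∫ ω, ε (i+1) ω (v (k₀ ω)) * h (X ω) ∂P
              = ∫ ω, ∑ k ∈ Finset.range (N+1), ε (i+1) ω (v k) * u k (X ω) ∂P :=
            integral_congr_ae (Filter.Eventually.of_forall fun ω =>
              (hsum (fun k => ε (i+1) ω (v k)) ω).symm)
          rw [e1, integral_finset_sum _ (fun k _ => hIterm v hv k)]
          have e2 : ∀ k ∈ Finset.range (N+1),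
              ∫ ω, ε (i+1) ω (v k) * u k (X ω) ∂P = v k * ∫ ω, u k (X ω) ∂P :=
            fun k _ => star (v k) (hv k) (u k) (humeas k)
          rw [Finset.sum_congr rfl e2]
          have e3 : ∀ k ∈ Finset.range (N+1),
              v k * ∫ ω, u k (X ω) ∂P = ∫ ω, v k * u k (X ω) ∂P :=
            fun k _ => (integral_const_mul _ _).symm
          rw [Finset.sum_congr rfl e3, ← integral_finset_sum _ (fun k _ => hIterm' v hv k)]
          exact integral_congr_ae (Filter.Eventually.of_forall fun ω => hsum v ω)
        have hIvk : ∀ (v : ℕ → ℝ), (∀ k, v k ∈ Set.Icc s₁ s₂) →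
            Integrable (fun ω => v (k₀ ω) * h (X ω)) P := by
          intro v hv
          exact (integrable_finset_sum _ (fun k _ => hIterm' v hv k)).congr
            (Filter.Eventually.of_forall fun ω => hsum v ω)
        have hIεvk : ∀ (v : ℕ → ℝ), (∀ k, v k ∈ Set.Icc s₁ s₂) →
            Integrable (fun ω => ε (i+1) ω (v (k₀ ω)) * h (X ω)) P := by
          intro v hv
          exact (integrable_finset_sum _ (fun k _ => hIterm v hv k)).congr
            (Filter.Eventually.of_forall fun ω => hsum (fun k => ε (i+1) ω (v k)) ω)
        constructor
        · -- upper bound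
          have step1 : A ≤ ∫ ω, ε (i+1) ω (m (k₀ ω)) * h (X ω) ∂P := by
            refine integral_mono hIA (hIεvk m hmIcc) (fun ω => ?_)
            rw [hTx ω]
            refine mul_le_mul_of_nonneg_right ?_ (h0 _)
            exact (hε (i+1) ω).1 (hYmem ω) (hmIcc _) (le_min (hmemk ω).2.le (hYmem ω).2)
          have step3 : ∫ ω, m (k₀ ω) * h (X ω) ∂P ≤ ∫ ω, (y (X ω) + d) * h (X ω) ∂P := by
            refine integral_mono (hIvk m hmIcc) ?_ (fun ω => ?_)
            · exact integrable_bdd ((M₀ + d) * (s₂ - s₁))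
                (((hymeas.comp hXmeas).add_const d).mul hhX)
                (fun ω => by
                  rw [abs_mul]
                  refine mul_le_mul ?_ (habs _) (abs_nonneg _) (by linarith)
                  calc |y (X ω) + d| ≤ |y (X ω)| + |d| := abs_add_le _ _
                  _ ≤ M₀ + d := by
                      have := habsIcc _ (hYmem ω)
                      rw [abs_of_pos hd]
                      linarith)
            · refine mul_le_mul_of_nonneg_right ?_ (h0 _)
              calc m (k₀ ω) ≤ c (k₀ ω) + d := min_le_left _ _
              _ ≤ y (X ω) + d := by linarith [(hmemk ω).1]
          have step4 : ∫ ω, (y (X ω) + d) * h (X ω) ∂P = B + d * ∫ ω, h (X ω) ∂P := by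
            have e : ∀ ω, (y (X ω) + d) * h (X ω) = y (X ω) * h (X ω) + d * h (X ω) :=
              fun ω => by ring
            rw [integral_congr_ae (Filter.Eventually.of_forall e),
              integral_add hIB (hIh.const_mul d), integral_const_mul]
          have hfin : d * ∫ ω, h (X ω) ∂P ≤ d * (s₂ - s₁) :=
            mul_le_mul_of_nonneg_left hinth_le hd.le
          calc A ≤ ∫ ω, ε (i+1) ω (m (k₀ ω)) * h (X ω) ∂P := step1
          _ = ∫ ω, m (k₀ ω) * h (X ω) ∂P := hchain m hmIcc
          _ ≤ ∫ ω, (y (X ω) + d) * h (X ω) ∂P := step3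
          _ = B + d * ∫ ω, h (X ω) ∂P := step4
          _ ≤ B + d * (s₂ - s₁) := by linarith
        · -- lower bound
          have step1 : ∫ ω, ε (i+1) ω (m' (k₀ ω)) * h (X ω) ∂P ≤ A := by
            refine integral_mono (hIεvk m' hm'Icc) hIA (fun ω => ?_)
            rw [hTx ω]
            refine mul_le_mul_of_nonneg_right ?_ (h0 _)
            refine (hε (i+1) ω).1 (hm'Icc _) (hYmem ω) ?_
            calc m' (k₀ ω) ≤ c (k₀ ω) := min_le_left _ _
            _ ≤ y (X ω) := (hmemk ω).1
          have step3 : ∫ ω, (y (X ω) - d) * h (X ω) ∂P ≤ ∫ ω, m' (k₀ ω) * h (X ω) ∂P := by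
            refine integral_mono ?_ (hIvk m' hm'Icc) (fun ω => ?_)
            · exact integrable_bdd ((M₀ + d) * (s₂ - s₁))
                (((hymeas.comp hXmeas).sub_const d).mul hhX)
                (fun ω => by
                  rw [abs_mul]
                  refine mul_le_mul ?_ (habs _) (abs_nonneg _) (by linarith)
                  calc |y (X ω) - d| ≤ |y (X ω)| + |d| := abs_sub _ _
                  _ ≤ M₀ + d := by
                      have := habsIcc _ (hYmem ω)
                      rw [abs_of_pos hd]
                      linarith)
            · refine mul_le_mul_of_nonneg_right ?_ (h0 _)
              refine le_min ?_ ?_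
              · linarith [(hmemk ω).2]
              · linarith [(hYmem ω).2]
          have step4 : ∫ ω, (y (X ω) - d) * h (X ω) ∂P = B - d * ∫ ω, h (X ω) ∂P := by
            have e : ∀ ω, (y (X ω) - d) * h (X ω) = y (X ω) * h (X ω) - d * h (X ω) :=
              fun ω => by ring
            rw [integral_congr_ae (Filter.Eventually.of_forall e),
              integral_sub hIB (hIh.const_mul d), integral_const_mul]
          have hfin : d * ∫ ω, h (X ω) ∂P ≤ d * (s₂ - s₁) :=
            mul_le_mul_of_nonneg_left hinth_le hd.le
          have : B - d * (s₂ - s₁) ≤ A := by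
            calc B - d * (s₂ - s₁) ≤ B - d * ∫ ω, h (X ω) ∂P := by linarith
            _ = ∫ ω, (y (X ω) - d) * h (X ω) ∂P := step4.symm
            _ ≤ ∫ ω, m' (k₀ ω) * h (X ω) ∂P := step3
            _ = ∫ ω, ε (i+1) ω (m' (k₀ ω)) * h (X ω) ∂P := (hchain m' hm'Icc).symm
            _ ≤ A := step1
          linarith
      by_contra hne
      have h1 : 0 < |A - B| := abs_pos.mpr (sub_ne_zero.mpr hne)
      have hs' : (0:ℝ) < s₂ - s₁ := by linarith
      have h2 := main (|A - B| / (2 * (s₂ - s₁))) (by positivity)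
      have h3 : |A - B| ≤ (|A - B| / (2 * (s₂ - s₁))) * (s₂ - s₁) :=
        abs_sub_le_iff.mpr ⟨by linarith [h2.1], by linarith [h2.2]⟩
      have h4 : (|A - B| / (2 * (s₂ - s₁))) * (s₂ - s₁) = |A - B| / 2 := by
        field_simp
      rw [h4] at h3
      linarith
    -- assemble using positive and negative parts
    set hp : ℝ → ℝ := fun t => min (max (t - x) 0) (s₂ - s₁) with hpdef
    set hn : ℝ → ℝ := fun t => min (max (x - t) 0) (s₂ - s₁) with hndef
    have hpm : Measurable hp := ((measurable_id.sub_const x).max measurable_const).min measurable_const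
    have hnm : Measurable hn := ((measurable_const.sub measurable_id).max measurable_const).min measurable_const
    have hp0 : ∀ t, 0 ≤ hp t := fun t => le_min (le_max_right _ _) (by linarith)
    have hn0 : ∀ t, 0 ≤ hn t := fun t => le_min (le_max_right _ _) (by linarith)
    have hpb : ∀ t, hp t ≤ s₂ - s₁ := fun t => min_le_right _ _
    have hnb : ∀ t, hn t ≤ s₂ - s₁ := fun t => min_le_right _ _
    have hdiff : ∀ t ∈ Set.Icc s₁ s₂, hp t - hn t = t - x := by
      intro t ht
      obtain ⟨d1, d2⟩ := ht
      obtain ⟨d3, d4⟩ := hx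
      simp only [hpdef, hndef, max_def, min_def]
      split_ifs <;> linarith
    have Lp := L hp hpm hp0 hpb
    have Ln := L hn hnm hn0 hnb
    have habsp : ∀ t, |hp t| ≤ s₂ - s₁ := fun t => abs_le.mpr ⟨by linarith [hp0 t], hpb t⟩
    have habsn : ∀ t, |hn t| ≤ s₂ - s₁ := fun t => abs_le.mpr ⟨by linarith [hn0 t], hnb t⟩
    have hIT1p : Integrable (fun ω => T (i+1) ω x * hp (X ω)) P :=
      integrable_bdd (M₀ * (s₂ - s₁)) (hT1meas.mul (hpm.comp hXmeas)) (fun ω => by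
        rw [abs_mul]
        exact mul_le_mul (habsIcc _ (hT1mem ω)) (habsp _) (abs_nonneg _) hM₀0)
    have hIT1n : Integrable (fun ω => T (i+1) ω x * hn (X ω)) P :=
      integrable_bdd (M₀ * (s₂ - s₁)) (hT1meas.mul (hnm.comp hXmeas)) (fun ω => by
        rw [abs_mul]
        exact mul_le_mul (habsIcc _ (hT1mem ω)) (habsn _) (abs_nonneg _) hM₀0)
    have hIyp : Integrable (fun ω => y (X ω) * hp (X ω)) P :=
      integrable_bdd (M₀ * (s₂ - s₁)) ((hymeas.comp hXmeas).mul (hpm.comp hXmeas)) (fun ω => by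
        rw [abs_mul]
        exact mul_le_mul (habsIcc _ (hYmem ω)) (habsp _) (abs_nonneg _) hM₀0)
    have hIyn : Integrable (fun ω => y (X ω) * hn (X ω)) P :=
      integrable_bdd (M₀ * (s₂ - s₁)) ((hymeas.comp hXmeas).mul (hnm.comp hXmeas)) (fun ω => by
        rw [abs_mul]
        exact mul_le_mul (habsIcc _ (hYmem ω)) (habsn _) (abs_nonneg _) hM₀0)
    have hIxX : Integrable (fun ω => x * (X ω - x)) P :=
      integrable_bdd (M₀ * (M₀ + M₀)) (measurable_const.mul (hXmeas.sub_const x)) (fun ω => by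
        rw [abs_mul]
        refine mul_le_mul (habsIcc x hx) ?_ (abs_nonneg _) hM₀0
        have h1 := abs_le.mp (habsIcc _ (hXmem ω))
        have h2 := abs_le.mp (habsIcc x hx)
        rw [abs_le]
        constructor <;> linarith)
    calc ∫ ω, (T (i + 1) ω x - x) * (X ω - x) ∂P
        = ∫ ω, (T (i+1) ω x * hp (X ω) - T (i+1) ω x * hn (X ω) - x * (X ω - x)) ∂P := by
          refine integral_congr_ae (Filter.Eventually.of_forall fun ω => ?_)
          have hd := hdiff (X ω) (hXmem ω)
          linear_combination (-(T (i + 1) ω x)) * hd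
      _ = (∫ ω, T (i+1) ω x * hp (X ω) ∂P) - (∫ ω, T (i+1) ω x * hn (X ω) ∂P)
          - ∫ ω, x * (X ω - x) ∂P := by
          have hs1 : Integrable (fun ω => T (i+1) ω x * hp (X ω) - T (i+1) ω x * hn (X ω)) P :=
            hIT1p.sub hIT1n
          rw [integral_sub hs1 hIxX, integral_sub hIT1p hIT1n]
      _ = (∫ ω, y (X ω) * hp (X ω) ∂P) - (∫ ω, y (X ω) * hn (X ω) ∂P)
          - ∫ ω, x * (X ω - x) ∂P := by rw [Lp, Ln]
      _ = ∫ ω, (y (X ω) * hp (X ω) - y (X ω) * hn (X ω) - x * (X ω - x)) ∂P := by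
          have hs2 : Integrable (fun ω => y (X ω) * hp (X ω) - y (X ω) * hn (X ω)) P :=
            hIyp.sub hIyn
          rw [integral_sub hs2 hIxX, integral_sub hIyp hIyn]
      _ = ∫ ω, α * (X ω - x) ^ 2 ∂P := by
          refine integral_congr_ae (Filter.Eventually.of_forall fun ω => ?_)
          have hd := hdiff (X ω) (hXmem ω)
          have hy : y (X ω) = x + α * (X ω - x) := rfl
          linear_combination (y (X ω)) * hd + (X ω - x) * hy
      _ = α * ∫ ω, (X ω - x) ^ 2 ∂P := integral_const_mul _ _
  have h1 : (∫ x in s₁..s₂, ∫ ω, (T (i + 1) ω x - x) * (T i ω x - x) ∂P) =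
      α * ∫ x in s₁..s₂, ∫ ω, (T i ω x - x) ^ 2 ∂P := by
    rw [intervalIntegral.integral_congr key, intervalIntegral.integral_const_mul]
  exact ⟨h1, fun hpos => by rw [h1, mul_div_assoc, div_self hpos.ne', mul_one]⟩
end ATM
end
end

section
/- Pointwise moment identification of the concurrent coefficient: let (T_i) be a stationary sequence of random elements of 𝒯 satisfying T_{i+1} = β⊛T_i ⊕ ε_{i+1}, where ε_{i+1} is a random element of 𝒯 (jointly measurable) independent of T_i with E[ε_{i+1}(y)] = y for all y∈𝒮. Then for every x∈𝒮 with 0≤β(x)≤1: E[(T_{i+1}(x)−x)(T_i(x)−x)] = β(x)·E[(T_i(x)−x)²]; in particular, if E[(T_i(x)−x)²] > 0 then β(x) = E[(T_{i+1}(x)−x)(T_i(x)−x)] / E[(T_i(x)−x)²]. -/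
open MeasureTheory ProbabilityTheory Filter Topology

noncomputable section

namespace ATM

variable {Ω : Type*}

section MomentAux

variable {Ω : Type*} [MeasurableSpace Ω]

lemma abs_le_of_Icc {s₁ s₂ y : ℝ} (h : y ∈ Set.Icc s₁ s₂) : |y| ≤ |s₁| + |s₂| := by
  rcases h with ⟨h1, h2⟩
  have := neg_abs_le s₁
  have := le_abs_self s₂
  have := abs_nonneg s₁
  have := abs_nonneg s₂
  rw [abs_le]
  constructor <;> linarith

lemma integrable_of_bdd {P : Measure Ω} [IsProbabilityMeasure P] {f : Ω → ℝ}
    (hf : Measurable f) {C : ℝ} (hC : ∀ ω, |f ω| ≤ C) : Integrable f P :=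
  (integrable_const C).mono' hf.aestronglyMeasurable (ae_of_all _ fun ω => by
    simpa [Real.norm_eq_abs] using hC ω)

lemma step_lemma (P : Measure Ω) [IsProbabilityMeasure P] {s₁ s₂ : ℝ} (hs : s₁ < s₂)
    {σ : Ω → ℝ} (hσm : Measurable σ) (hσ : ∀ ω, σ ω ∈ Set.Icc s₁ s₂)
    {e : Ω → ℝ → ℝ} (hem : JM e)
    (hrange : ∀ ω, Set.MapsTo (e ω) (Set.Icc s₁ s₂) (Set.Icc s₁ s₂))
    (hmean : ∀ y ∈ Set.Icc s₁ s₂, (∫ ω, e ω y ∂P) = y)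
    (hind : ∀ u : ℝ → ℝ, Measurable u → ∀ y : ℝ,
      IndepFun (fun ω => u (σ ω)) (fun ω => e ω y) P)
    {v : ℝ → ℝ} (hvm : Measurable v) (hv0 : ∀ t ∈ Set.Icc s₁ s₂, 0 ≤ v t)
    (hvB : ∀ t ∈ Set.Icc s₁ s₂, v t ≤ s₂ - s₁)
    {k : ℝ → ℤ} (hkm : Measurable k) {K : Finset ℤ} (hK : ∀ ω, k (σ ω) ∈ K)
    {g : ℤ → ℝ} (hg : ∀ j ∈ K, g j ∈ Set.Icc s₁ s₂) :
    ∫ ω, e ω (g (k (σ ω))) * v (σ ω) ∂P = ∫ ω, g (k (σ ω)) * v (σ ω) ∂P := by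
  classical
  have hvb : ∀ ω, |v (σ ω)| ≤ s₂ - s₁ := fun ω =>
    abs_le.2 ⟨by linarith [hv0 _ (hσ ω), hvB _ (hσ ω)], hvB _ (hσ ω)⟩
  have heb : ∀ (ω : Ω) (y : ℝ), y ∈ Set.Icc s₁ s₂ → |e ω y| ≤ |s₁| + |s₂| :=
    fun ω y hy => abs_le_of_Icc (hrange ω hy)
  set u : ℤ → ℝ → ℝ := fun j t => if k t = j then v t else 0 with hu
  have hum : ∀ j, Measurable (u j) := fun j =>
    Measurable.ite (hkm (measurableSet_singleton j)) hvm measurable_const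
  have hub : ∀ j ω, |u j (σ ω)| ≤ s₂ - s₁ := by
    intro j ω
    by_cases h : k (σ ω) = j
    · simpa [u, h] using hvb ω
    · simp [u, h]
      linarith [hs.le]
  have hEm : ∀ y : ℝ, Measurable fun ω => e ω y := fun y =>
    hem.comp (measurable_id.prodMk measurable_const)
  have int_u : ∀ j, Integrable (fun ω => u j (σ ω)) P := fun j =>
    integrable_of_bdd ((hum j).comp hσm) (hub j)
  have int_e : ∀ j ∈ K, Integrable (fun ω => e ω (g j)) P := fun j hj =>
    integrable_of_bdd (hEm (g j)) (fun ω => heb ω _ (hg j hj))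
  have hterm_int : ∀ j ∈ K, Integrable (fun ω => u j (σ ω) * e ω (g j)) P := by
    intro j hj
    refine integrable_of_bdd (((hum j).comp hσm).mul (hEm (g j)))
      (C := (s₂ - s₁) * (|s₁| + |s₂|)) fun ω => ?_
    rw [abs_mul]
    exact mul_le_mul (hub j ω) (heb ω _ (hg j hj)) (abs_nonneg _) (by linarith [hs.le])
  have hterm_int2 : ∀ j ∈ K, Integrable (fun ω => u j (σ ω) * g j) P := by
    intro j hj
    exact (int_u j).mul_const _
  have collapse1 : ∀ ω, e ω (g (k (σ ω))) * v (σ ω) = ∑ j ∈ K, u j (σ ω) * e ω (g j) := by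
    intro ω
    calc e ω (g (k (σ ω))) * v (σ ω) = v (σ ω) * e ω (g (k (σ ω))) := mul_comm _ _
      _ = ∑ j ∈ K, if k (σ ω) = j then v (σ ω) * e ω (g j) else 0 :=
          ((Finset.sum_ite_eq K (k (σ ω)) fun j => v (σ ω) * e ω (g j)).trans
            (if_pos (hK ω))).symm
      _ = ∑ j ∈ K, u j (σ ω) * e ω (g j) := by
          refine Finset.sum_congr rfl fun j _ => ?_
          by_cases h : k (σ ω) = j <;> simp [u, h]
  have collapse2 : ∀ ω, g (k (σ ω)) * v (σ ω) = ∑ j ∈ K, u j (σ ω) * g j := by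
    intro ω
    calc g (k (σ ω)) * v (σ ω) = v (σ ω) * g (k (σ ω)) := mul_comm _ _
      _ = ∑ j ∈ K, if k (σ ω) = j then v (σ ω) * g j else 0 :=
          ((Finset.sum_ite_eq K (k (σ ω)) fun j => v (σ ω) * g j).trans
            (if_pos (hK ω))).symm
      _ = ∑ j ∈ K, u j (σ ω) * g j := by
          refine Finset.sum_congr rfl fun j _ => ?_
          by_cases h : k (σ ω) = j <;> simp [u, h]
  calc ∫ ω, e ω (g (k (σ ω))) * v (σ ω) ∂P
      = ∫ ω, ∑ j ∈ K, u j (σ ω) * e ω (g j) ∂P :=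
        integral_congr_ae (ae_of_all _ collapse1)
    _ = ∑ j ∈ K, ∫ ω, u j (σ ω) * e ω (g j) ∂P := integral_finset_sum K hterm_int
    _ = ∑ j ∈ K, ∫ ω, u j (σ ω) * g j ∂P := by
        refine Finset.sum_congr rfl fun j hj => ?_
        have hmul := IndepFun.integral_mul_eq_mul_integral (hind (u j) (hum j) (g j)) (int_u j).aestronglyMeasurable (int_e j hj).aestronglyMeasurable
        have h1 : (fun ω => u j (σ ω) * e ω (g j))
            = (fun ω => u j (σ ω)) * fun ω => e ω (g j) := rfl
        rw [h1, hmul, hmean _ (hg j hj), ← integral_mul_const]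
    _ = ∫ ω, ∑ j ∈ K, u j (σ ω) * g j ∂P := (integral_finset_sum K hterm_int2).symm
    _ = ∫ ω, g (k (σ ω)) * v (σ ω) ∂P :=
        integral_congr_ae (ae_of_all _ fun ω => (collapse2 ω).symm)

lemma cross_nonneg (P : Measure Ω) [IsProbabilityMeasure P] {s₁ s₂ : ℝ} (hs : s₁ < s₂)
    {σ : Ω → ℝ} (hσm : Measurable σ) (hσ : ∀ ω, σ ω ∈ Set.Icc s₁ s₂)
    {e : Ω → ℝ → ℝ} (hem : JM e)
    (hmono : ∀ ω, MonotoneOn (e ω) (Set.Icc s₁ s₂))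
    (hrange : ∀ ω, Set.MapsTo (e ω) (Set.Icc s₁ s₂) (Set.Icc s₁ s₂))
    (hmean : ∀ y ∈ Set.Icc s₁ s₂, (∫ ω, e ω y ∂P) = y)
    (hind : ∀ u : ℝ → ℝ, Measurable u → ∀ y : ℝ,
      IndepFun (fun ω => u (σ ω)) (fun ω => e ω y) P)
    {x c : ℝ} (hx : x ∈ Set.Icc s₁ s₂) (hc0 : 0 ≤ c) (hc1 : c ≤ 1)
    {v : ℝ → ℝ} (hvm : Measurable v) (hv0 : ∀ t ∈ Set.Icc s₁ s₂, 0 ≤ v t)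
    (hvB : ∀ t ∈ Set.Icc s₁ s₂, v t ≤ s₂ - s₁) :
    ∫ ω, e ω (x + c * (σ ω - x)) * v (σ ω) ∂P
      = ∫ ω, (x + c * (σ ω - x)) * v (σ ω) ∂P := by
  classical
  set μf : ℝ → ℝ := fun t => x + c * (t - x) with hμf
  have hμfm : Measurable μf := by
    unfold μf; fun_prop
  have hμIcc : ∀ t ∈ Set.Icc s₁ s₂, μf t ∈ Set.Icc s₁ s₂ := by
    intro t ht
    rcases ht with ⟨ht1, ht2⟩
    rcases hx with ⟨hx1, hx2⟩
    have : μf t = x + c * (t - x) := rfl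
    rw [Set.mem_Icc, this]
    constructor <;> nlinarith
  have hvb : ∀ ω, |v (σ ω)| ≤ s₂ - s₁ := fun ω =>
    abs_le.2 ⟨by linarith [hv0 _ (hσ ω), hvB _ (hσ ω)], hvB _ (hσ ω)⟩
  have heb : ∀ (ω : Ω) (y : ℝ), y ∈ Set.Icc s₁ s₂ → |e ω y| ≤ |s₁| + |s₂| :=
    fun ω y hy => abs_le_of_Icc (hrange ω hy)
  have hσvm : Measurable fun ω => v (σ ω) := hvm.comp hσm
  have intv : Integrable (fun ω => v (σ ω)) P := integrable_of_bdd hσvm hvb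
  have hintv_le : ∫ ω, v (σ ω) ∂P ≤ s₂ - s₁ := by
    calc ∫ ω, v (σ ω) ∂P ≤ ∫ _ω, (s₂ - s₁) ∂P :=
          integral_mono intv (integrable_const _) fun ω => hvB _ (hσ ω)
      _ = s₂ - s₁ := by simp
  set A := ∫ ω, e ω (μf (σ ω)) * v (σ ω) ∂P with hA
  set B := ∫ ω, μf (σ ω) * v (σ ω) ∂P with hB
  have intA : Integrable (fun ω => e ω (μf (σ ω)) * v (σ ω)) P := by
    refine integrable_of_bdd ((hem.comp (measurable_id.prodMk (hμfm.comp hσm))).mul hσvm)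
      (C := (|s₁| + |s₂|) * (s₂ - s₁)) fun ω => ?_
    rw [abs_mul]
    exact mul_le_mul (heb ω _ (hμIcc _ (hσ ω))) (hvb ω) (abs_nonneg _)
      (by positivity)
  have intB : Integrable (fun ω => μf (σ ω) * v (σ ω)) P := by
    refine integrable_of_bdd ((hμfm.comp hσm).mul hσvm)
      (C := (|s₁| + |s₂|) * (s₂ - s₁)) fun ω => ?_
    rw [abs_mul]
    exact mul_le_mul (abs_le_of_Icc (hμIcc _ (hσ ω))) (hvb ω) (abs_nonneg _) (by positivity)
  have key : ∀ n : ℕ, |A - B| ≤ (s₂ - s₁) / 2 ^ n := by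
    intro n
    have h2 : (0:ℝ) < 2 ^ n := by positivity
    set k : ℝ → ℤ := fun t => ⌊μf t * 2 ^ n⌋ with hkdef
    have hkm : Measurable k := (hμfm.mul_const _).floor
    set K : Finset ℤ := Finset.Icc ⌊s₁ * 2 ^ n⌋ ⌊s₂ * 2 ^ n⌋ with hKdef
    have hK : ∀ ω, k (σ ω) ∈ K := by
      intro ω
      have hM := hμIcc _ (hσ ω)
      refine Finset.mem_Icc.2 ⟨Int.floor_le_floor ?_, Int.floor_le_floor ?_⟩
      · nlinarith [hM.1]
      · nlinarith [hM.2]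
    set gU : ℤ → ℝ := fun j => min s₂ (((j : ℝ) + 1) / 2 ^ n) with hgUdef
    set gL : ℤ → ℝ := fun j => max s₁ ((j : ℝ) / 2 ^ n) with hgLdef
    have hgU : ∀ j ∈ K, gU j ∈ Set.Icc s₁ s₂ := by
      intro j hj
      have h1 : (⌊s₁ * 2 ^ n⌋ : ℝ) ≤ (j : ℝ) := Int.cast_le.2 (Finset.mem_Icc.1 hj).1
      have h2' := Int.lt_floor_add_one (s₁ * 2 ^ n)
      refine ⟨le_min hs.le ?_, min_le_left _ _⟩
      rw [le_div_iff₀ h2]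
      linarith
    have hgL : ∀ j ∈ K, gL j ∈ Set.Icc s₁ s₂ := by
      intro j hj
      have h1 : (j : ℝ) ≤ (⌊s₂ * 2 ^ n⌋ : ℝ) := Int.cast_le.2 (Finset.mem_Icc.1 hj).2
      have h2' := Int.floor_le (s₂ * 2 ^ n)
      exact ⟨le_max_left _ _, max_le hs.le (by rw [div_le_iff₀ h2]; linarith)⟩
    have hMU : ∀ ω, μf (σ ω) ≤ gU (k (σ ω)) := by
      intro ω
      refine le_min (hμIcc _ (hσ ω)).2 ?_
      rw [le_div_iff₀ h2]
      have := Int.lt_floor_add_one (μf (σ ω) * 2 ^ n)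
      push_cast
      linarith
    have hUM : ∀ ω, gU (k (σ ω)) ≤ μf (σ ω) + 1 / 2 ^ n := by
      intro ω
      have h3 : ((k (σ ω) : ℝ)) / 2 ^ n ≤ μf (σ ω) := by
        rw [div_le_iff₀ h2]; exact Int.floor_le _
      calc gU (k (σ ω)) ≤ ((k (σ ω) : ℝ) + 1) / 2 ^ n := min_le_right _ _
        _ = (k (σ ω) : ℝ) / 2 ^ n + 1 / 2 ^ n := add_div _ _ _
        _ ≤ μf (σ ω) + 1 / 2 ^ n := by linarith
    have hLM : ∀ ω, gL (k (σ ω)) ≤ μf (σ ω) := by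
      intro ω
      refine max_le (hμIcc _ (hσ ω)).1 ?_
      rw [div_le_iff₀ h2]; exact Int.floor_le _
    have hML : ∀ ω, μf (σ ω) - 1 / 2 ^ n ≤ gL (k (σ ω)) := by
      intro ω
      have h3 : μf (σ ω) < ((k (σ ω) : ℝ) + 1) / 2 ^ n := by
        rw [lt_div_iff₀ h2]
        have := Int.lt_floor_add_one (μf (σ ω) * 2 ^ n)
        push_cast
        linarith
      rw [add_div] at h3
      calc μf (σ ω) - 1 / 2 ^ n ≤ (k (σ ω) : ℝ) / 2 ^ n := by linarith
        _ ≤ gL (k (σ ω)) := le_max_right _ _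
    have hgUm : Measurable fun ω => gU (k (σ ω)) :=
      (measurable_from_top (f := gU)).comp (hkm.comp hσm)
    have hgLm : Measurable fun ω => gL (k (σ ω)) :=
      (measurable_from_top (f := gL)).comp (hkm.comp hσm)
    have intAU : Integrable (fun ω => e ω (gU (k (σ ω))) * v (σ ω)) P := by
      refine integrable_of_bdd ((hem.comp (measurable_id.prodMk hgUm)).mul hσvm)
        (C := (|s₁| + |s₂|) * (s₂ - s₁)) fun ω => ?_
      rw [abs_mul]
      exact mul_le_mul (heb ω _ (hgU _ (hK ω))) (hvb ω) (abs_nonneg _) (by positivity)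
    have intAL : Integrable (fun ω => e ω (gL (k (σ ω))) * v (σ ω)) P := by
      refine integrable_of_bdd ((hem.comp (measurable_id.prodMk hgLm)).mul hσvm)
        (C := (|s₁| + |s₂|) * (s₂ - s₁)) fun ω => ?_
      rw [abs_mul]
      exact mul_le_mul (heb ω _ (hgL _ (hK ω))) (hvb ω) (abs_nonneg _) (by positivity)
    have intBU : Integrable (fun ω => gU (k (σ ω)) * v (σ ω)) P := by
      refine integrable_of_bdd (hgUm.mul hσvm)
        (C := (|s₁| + |s₂|) * (s₂ - s₁)) fun ω => ?_
      rw [abs_mul]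
      exact mul_le_mul (abs_le_of_Icc (hgU _ (hK ω))) (hvb ω) (abs_nonneg _) (by positivity)
    have intBL : Integrable (fun ω => gL (k (σ ω)) * v (σ ω)) P := by
      refine integrable_of_bdd (hgLm.mul hσvm)
        (C := (|s₁| + |s₂|) * (s₂ - s₁)) fun ω => ?_
      rw [abs_mul]
      exact mul_le_mul (abs_le_of_Icc (hgL _ (hK ω))) (hvb ω) (abs_nonneg _) (by positivity)
    have intMv : Integrable (fun ω => μf (σ ω) * v (σ ω) + (1 / 2 ^ n) * v (σ ω)) P :=
      intB.add (intv.const_mul _)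
    have hAU : A ≤ ∫ ω, e ω (gU (k (σ ω))) * v (σ ω) ∂P := by
      refine integral_mono intA intAU fun ω => ?_
      exact mul_le_mul_of_nonneg_right
        (hmono ω (hμIcc _ (hσ ω)) (hgU _ (hK ω)) (hMU ω)) (hv0 _ (hσ ω))
    have hstepU : ∫ ω, e ω (gU (k (σ ω))) * v (σ ω) ∂P
        = ∫ ω, gU (k (σ ω)) * v (σ ω) ∂P :=
      step_lemma P hs hσm hσ hem hrange hmean hind hvm hv0 hvB hkm hK hgU
    have hstepL : ∫ ω, e ω (gL (k (σ ω))) * v (σ ω) ∂P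
        = ∫ ω, gL (k (σ ω)) * v (σ ω) ∂P :=
      step_lemma P hs hσm hσ hem hrange hmean hind hvm hv0 hvB hkm hK hgL
    have hBU : ∫ ω, gU (k (σ ω)) * v (σ ω) ∂P ≤ B + (s₂ - s₁) / 2 ^ n := by
      have h1 : ∫ ω, gU (k (σ ω)) * v (σ ω) ∂P
          ≤ ∫ ω, (μf (σ ω) * v (σ ω) + (1 / 2 ^ n) * v (σ ω)) ∂P := by
        refine integral_mono intBU intMv fun ω => ?_
        have := mul_le_mul_of_nonneg_right (hUM ω) (hv0 _ (hσ ω))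
        nlinarith [this]
      rw [integral_add intB (intv.const_mul _), integral_const_mul] at h1
      have h2' : (1 / (2:ℝ) ^ n) * ∫ ω, v (σ ω) ∂P ≤ (1 / 2 ^ n) * (s₂ - s₁) :=
        mul_le_mul_of_nonneg_left hintv_le (by positivity)
      calc ∫ ω, gU (k (σ ω)) * v (σ ω) ∂P
          ≤ B + (1 / 2 ^ n) * ∫ ω, v (σ ω) ∂P := h1
        _ ≤ B + (1 / 2 ^ n) * (s₂ - s₁) := by linarith
        _ = B + (s₂ - s₁) / 2 ^ n := by ring
    have hBL : B - (s₂ - s₁) / 2 ^ n ≤ ∫ ω, gL (k (σ ω)) * v (σ ω) ∂P := by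
      have h1 : ∫ ω, (μf (σ ω) * v (σ ω) - (1 / 2 ^ n) * v (σ ω)) ∂P
          ≤ ∫ ω, gL (k (σ ω)) * v (σ ω) ∂P := by
        refine integral_mono (intB.sub (intv.const_mul _)) intBL fun ω => ?_
        have := mul_le_mul_of_nonneg_right (hML ω) (hv0 _ (hσ ω))
        nlinarith [this]
      rw [integral_sub intB (intv.const_mul _), integral_const_mul] at h1
      have h2' : (1 / (2:ℝ) ^ n) * ∫ ω, v (σ ω) ∂P ≤ (1 / 2 ^ n) * (s₂ - s₁) :=
        mul_le_mul_of_nonneg_left hintv_le (by positivity)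
      have : B - (s₂ - s₁) / 2 ^ n ≤ B - (1 / 2 ^ n) * ∫ ω, v (σ ω) ∂P := by
        have : (1 / (2:ℝ) ^ n) * (s₂ - s₁) = (s₂ - s₁) / 2 ^ n := by ring
        linarith [h2']
      linarith
    have hAL : ∫ ω, e ω (gL (k (σ ω))) * v (σ ω) ∂P ≤ A := by
      refine integral_mono intAL intA fun ω => ?_
      exact mul_le_mul_of_nonneg_right
        (hmono ω (hgL _ (hK ω)) (hμIcc _ (hσ ω)) (hLM ω)) (hv0 _ (hσ ω))
    rw [abs_sub_le_iff]
    constructor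
    · linarith [hAU, hstepU ▸ hBU]
    · linarith [hAL, hstepL ▸ hBL]
  have htend : Tendsto (fun n : ℕ => (s₂ - s₁) / 2 ^ n) atTop (𝓝 0) := by
    have h1 : Tendsto (fun n : ℕ => ((1:ℝ)/2) ^ n) atTop (𝓝 0) :=
      tendsto_pow_atTop_nhds_zero_of_lt_one (by norm_num) (by norm_num)
    have h2 : (fun n : ℕ => (s₂ - s₁) / 2 ^ n) = fun n => (s₂ - s₁) * ((1:ℝ)/2) ^ n := by
      funext n
      rw [one_div, inv_pow]
      ring
    rw [h2]
    simpa using h1.const_mul (s₂ - s₁)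
  have habs : |A - B| ≤ 0 := ge_of_tendsto' htend key
  have : A = B := by
    have := abs_nonneg (A - B)
    have : |A - B| = 0 := le_antisymm habs this
    linarith [abs_eq_zero.1 this, sub_eq_zero.1 (abs_eq_zero.1 this)]
  exact this

end MomentAux

/-- Pointwise moment identification of the concurrent coefficient: for a stationary sequence
satisfying T_{i+1} = β ⊛ T_i ⊕ ε_{i+1} with innovation independent of T_i and identity
mean, at every x with 0 ≤ β(x) ≤ 1 one has
E[(T_{i+1}(x)-x)(T_i(x)-x)] = β(x) E[(T_i(x)-x)²]; in particular β(x) is identified as the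
corresponding ratio whenever the denominator is positive. -/
theorem cat_moment_identification
    {Ω : Type*} [MeasurableSpace Ω] (P : Measure Ω) [IsProbabilityMeasure P]
    (s₁ s₂ : ℝ) (hs : s₁ < s₂) (β : ℝ → ℝ)
    (hβ : ∀ y ∈ Set.Icc s₁ s₂, β y ∈ Set.Icc (-1 : ℝ) 1)
    (T ε : ℤ → Ω → ℝ → ℝ)
    (hTmeas : ∀ i, JM (T i)) (hεmeas : ∀ i, JM (ε i))
    (hT : ∀ i ω, IsTransport s₁ s₂ (T i ω)) (hε : ∀ i ω, IsTransport s₁ s₂ (ε i ω))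
    (hstat : Stationary P T)
    (hrec : ∀ (i : ℤ) (ω : Ω), T (i + 1) ω = cphi s₁ s₂ β (ε (i + 1) ω) (T i ω))
    (hindep : ∀ i : ℤ, IndepFun (T i) (ε (i + 1)) P)
    (hmean : ∀ (i : ℤ), ∀ y ∈ Set.Icc s₁ s₂, (∫ ω, ε i ω y ∂P) = y) :
    ∀ i : ℤ, ∀ x ∈ Set.Icc s₁ s₂, 0 ≤ β x → β x ≤ 1 →
      (∫ ω, (T (i + 1) ω x - x) * (T i ω x - x) ∂P) =
        β x * ∫ ω, (T i ω x - x) ^ 2 ∂P ∧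
      ((0 < ∫ ω, (T i ω x - x) ^ 2 ∂P) →
        β x = (∫ ω, (T (i + 1) ω x - x) * (T i ω x - x) ∂P) /
            (∫ ω, (T i ω x - x) ^ 2 ∂P)) := by
  intro i x hx hb0 hb1
  set c := β x with hc
  have hσm : Measurable fun ω => T i ω x :=
    (hTmeas i).comp (measurable_id.prodMk measurable_const)
  have hσ : ∀ ω, T i ω x ∈ Set.Icc s₁ s₂ := fun ω => (hT i ω).2.1 hx
  have hem : JM (ε (i + 1)) := hεmeas (i + 1)
  have hmono : ∀ ω, MonotoneOn (ε (i + 1) ω) (Set.Icc s₁ s₂) := fun ω => (hε (i + 1) ω).1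
  have hrange : ∀ ω, Set.MapsTo (ε (i + 1) ω) (Set.Icc s₁ s₂) (Set.Icc s₁ s₂) :=
    fun ω => (hε (i + 1) ω).2.1
  have hind : ∀ u : ℝ → ℝ, Measurable u → ∀ y : ℝ,
      IndepFun (fun ω => u (T i ω x)) (fun ω => ε (i + 1) ω y) P := by
    intro u hu y
    exact (hindep i).comp (show Measurable fun f : ℝ → ℝ => u (f x) from
      hu.comp (measurable_pi_apply x)) (measurable_pi_apply y)
  have hrw : ∀ ω, T (i + 1) ω x = ε (i + 1) ω (x + c * (T i ω x - x)) := by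
    intro ω
    rw [hrec i ω]
    show ε (i + 1) ω (bsmul s₁ s₂ β (T i ω) x) = _
    congr 1
    unfold bsmul
    rcases lt_or_eq_of_le hb0 with h | h
    · have h' : (0:ℝ) < β x := by rw [← hc]; exact h
      rw [if_pos h', ← hc]
    · have h0 : ¬ (0:ℝ) < β x := by rw [← hc, ← h]; exact lt_irrefl 0
      have h1 : β x = 0 := by rw [← hc, ← h]
      rw [if_neg h0, if_pos h1, ← h]
      ring
  -- cross term
  have hcross := cross_nonneg (s₁ := s₁) (s₂ := s₂) P hs hσm hσ hem hmono hrange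
    (hmean (i + 1)) hind hx hb0 hb1 (v := fun t => max (t - x) 0)
    ((measurable_id.sub_const x).max measurable_const)
    (fun t _ => le_max_right _ _)
    (fun t ht => max_le (by rcases ht with ⟨h1, h2⟩; rcases hx with ⟨h3, h4⟩; linarith)
      (by rcases hx with ⟨h3, h4⟩; linarith))
  have hcross2 := cross_nonneg (s₁ := s₁) (s₂ := s₂) P hs hσm hσ hem hmono hrange
    (hmean (i + 1)) hind hx hb0 hb1 (v := fun t => max (x - t) 0)
    ((measurable_const.sub measurable_id).max measurable_const)
    (fun t _ => le_max_right _ _)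
    (fun t ht => max_le (by rcases ht with ⟨h1, h2⟩; rcases hx with ⟨h3, h4⟩; linarith)
      (by rcases ht with ⟨h1, h2⟩; linarith))
  -- bounds and integrability
  have hwb : ∀ ω, |T i ω x - x| ≤ s₂ - s₁ := by
    intro ω
    rcases hσ ω with ⟨h1, h2⟩
    rcases hx with ⟨h3, h4⟩
    rw [abs_le]
    constructor <;> linarith
  have hμIcc : ∀ ω, x + c * (T i ω x - x) ∈ Set.Icc s₁ s₂ := by
    intro ω
    rcases hσ ω with ⟨h1, h2⟩
    rcases hx with ⟨h3, h4⟩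
    constructor <;> nlinarith
  have hMm : Measurable fun ω => x + c * (T i ω x - x) := by fun_prop
  have hEMm : Measurable fun ω => ε (i + 1) ω (x + c * (T i ω x - x)) :=
    hem.comp (measurable_id.prodMk hMm)
  have hEMb : ∀ ω, |ε (i + 1) ω (x + c * (T i ω x - x))| ≤ |s₁| + |s₂| := fun ω =>
    abs_le_of_Icc (hrange ω (hμIcc ω))
  have hwm : Measurable fun ω => T i ω x - x := hσm.sub_const x
  have int1 : Integrable (fun ω =>
      ε (i + 1) ω (x + c * (T i ω x - x)) * (T i ω x - x)) P := by
    refine integrable_of_bdd (hEMm.mul hwm) (C := (|s₁| + |s₂|) * (s₂ - s₁)) fun ω => ?_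
    rw [abs_mul]
    exact mul_le_mul (hEMb ω) (hwb ω) (abs_nonneg _) (by positivity)
  have int2 : Integrable (fun ω => x * (T i ω x - x)) P := by
    refine integrable_of_bdd (hwm.const_mul x) (C := |x| * (s₂ - s₁)) fun ω => ?_
    rw [abs_mul]
    exact mul_le_mul le_rfl (hwb ω) (abs_nonneg _) (abs_nonneg _)
  have int3 : Integrable (fun ω => (x + c * (T i ω x - x)) * (T i ω x - x)) P := by
    refine integrable_of_bdd (hMm.mul hwm) (C := (|s₁| + |s₂|) * (s₂ - s₁)) fun ω => ?_
    rw [abs_mul]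
    exact mul_le_mul (abs_le_of_Icc (hμIcc ω)) (hwb ω) (abs_nonneg _) (by positivity)
  -- main cross identity with weight (σ - x)
  have hsplit : ∀ t : ℝ, t - x = max (t - x) 0 - max (x - t) 0 := by
    intro t
    rcases le_total t x with h | h
    · rw [max_eq_right (by linarith : t - x ≤ 0), max_eq_left (by linarith : (0:ℝ) ≤ x - t)]
      ring
    · rw [max_eq_left (by linarith : (0:ℝ) ≤ t - x), max_eq_right (by linarith : x - t ≤ 0)]
      ring
  have hmaxb : ∀ ω, |max (T i ω x - x) 0| ≤ s₂ - s₁ := by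
    intro ω
    have := hwb ω; rw [abs_le] at this
    rw [abs_le]
    refine ⟨le_trans (by linarith) (le_max_right _ _), max_le (by linarith) (by linarith)⟩
  have hmaxb2 : ∀ ω, |max (x - T i ω x) 0| ≤ s₂ - s₁ := by
    intro ω
    have := hwb ω; rw [abs_le] at this
    rw [abs_le]
    refine ⟨le_trans (by linarith) (le_max_right _ _), max_le (by linarith) (by linarith)⟩
  have intE1 : Integrable (fun ω =>
      ε (i + 1) ω (x + c * (T i ω x - x)) * max (T i ω x - x) 0) P := by
    refine integrable_of_bdd (hEMm.mul ((hwm.max measurable_const)))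
      (C := (|s₁| + |s₂|) * (s₂ - s₁)) fun ω => ?_
    rw [abs_mul]
    exact mul_le_mul (hEMb ω) (hmaxb ω) (abs_nonneg _) (by positivity)
  have intE2 : Integrable (fun ω =>
      ε (i + 1) ω (x + c * (T i ω x - x)) * max (x - T i ω x) 0) P := by
    refine integrable_of_bdd (hEMm.mul (((measurable_const.sub hσm).max measurable_const)))
      (C := (|s₁| + |s₂|) * (s₂ - s₁)) fun ω => ?_
    rw [abs_mul]
    exact mul_le_mul (hEMb ω) (hmaxb2 ω) (abs_nonneg _) (by positivity)
  have intM1 : Integrable (fun ω =>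
      (x + c * (T i ω x - x)) * max (T i ω x - x) 0) P := by
    refine integrable_of_bdd (hMm.mul ((hwm.max measurable_const)))
      (C := (|s₁| + |s₂|) * (s₂ - s₁)) fun ω => ?_
    rw [abs_mul]
    exact mul_le_mul (abs_le_of_Icc (hμIcc ω)) (hmaxb ω) (abs_nonneg _) (by positivity)
  have intM2 : Integrable (fun ω =>
      (x + c * (T i ω x - x)) * max (x - T i ω x) 0) P := by
    refine integrable_of_bdd (hMm.mul (((measurable_const.sub hσm).max measurable_const)))
      (C := (|s₁| + |s₂|) * (s₂ - s₁)) fun ω => ?_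
    rw [abs_mul]
    exact mul_le_mul (abs_le_of_Icc (hμIcc ω)) (hmaxb2 ω) (abs_nonneg _) (by positivity)
  have hEcross : ∫ ω, ε (i + 1) ω (x + c * (T i ω x - x)) * (T i ω x - x) ∂P
      = ∫ ω, (x + c * (T i ω x - x)) * (T i ω x - x) ∂P := by
    calc ∫ ω, ε (i + 1) ω (x + c * (T i ω x - x)) * (T i ω x - x) ∂P
        = ∫ ω, (ε (i + 1) ω (x + c * (T i ω x - x)) * max (T i ω x - x) 0
            - ε (i + 1) ω (x + c * (T i ω x - x)) * max (x - T i ω x) 0) ∂P := by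
          refine integral_congr_ae (ae_of_all _ fun ω => ?_)
          beta_reduce
          linear_combination (ε (i + 1) ω (x + c * (T i ω x - x))) * hsplit (T i ω x)
      _ = (∫ ω, ε (i + 1) ω (x + c * (T i ω x - x)) * max (T i ω x - x) 0 ∂P)
            - ∫ ω, ε (i + 1) ω (x + c * (T i ω x - x)) * max (x - T i ω x) 0 ∂P :=
          integral_sub intE1 intE2
      _ = (∫ ω, (x + c * (T i ω x - x)) * max (T i ω x - x) 0 ∂P)
            - ∫ ω, (x + c * (T i ω x - x)) * max (x - T i ω x) 0 ∂P := by
          rw [hcross, hcross2]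
      _ = ∫ ω, ((x + c * (T i ω x - x)) * max (T i ω x - x) 0
            - (x + c * (T i ω x - x)) * max (x - T i ω x) 0) ∂P :=
          (integral_sub intM1 intM2).symm
      _ = ∫ ω, (x + c * (T i ω x - x)) * (T i ω x - x) ∂P := by
          refine integral_congr_ae (ae_of_all _ fun ω => ?_)
          beta_reduce
          linear_combination -((x + c * (T i ω x - x)) * hsplit (T i ω x))
  have main : (∫ ω, (T (i + 1) ω x - x) * (T i ω x - x) ∂P)
      = c * ∫ ω, (T i ω x - x) ^ 2 ∂P := by
    calc ∫ ω, (T (i + 1) ω x - x) * (T i ω x - x) ∂P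
        = ∫ ω, (ε (i + 1) ω (x + c * (T i ω x - x)) * (T i ω x - x)
            - x * (T i ω x - x)) ∂P := by
          refine integral_congr_ae (ae_of_all _ fun ω => ?_)
          beta_reduce
          rw [hrw ω]
          ring
      _ = (∫ ω, ε (i + 1) ω (x + c * (T i ω x - x)) * (T i ω x - x) ∂P)
            - ∫ ω, x * (T i ω x - x) ∂P := integral_sub int1 int2
      _ = (∫ ω, (x + c * (T i ω x - x)) * (T i ω x - x) ∂P)
            - ∫ ω, x * (T i ω x - x) ∂P := by rw [hEcross]
      _ = ∫ ω, ((x + c * (T i ω x - x)) * (T i ω x - x) - x * (T i ω x - x)) ∂P :=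
          (integral_sub int3 int2).symm
      _ = ∫ ω, c * (T i ω x - x) ^ 2 ∂P := by
          refine integral_congr_ae (ae_of_all _ fun ω => ?_)
          beta_reduce
          ring
      _ = c * ∫ ω, (T i ω x - x) ^ 2 ∂P := integral_const_mul c _
  refine ⟨main, fun hD => ?_⟩
  rw [main]
  exact (mul_div_cancel_right₀ _ (ne_of_gt hD)).symm
end ATM
end
end

section
/- Lipschitz continuity of the autocovariance functional in the transports: for all S₁,S₂,T₁,T₂ ∈ 𝒯, |∫_𝒮 (S₁(x)−x)(T₁(x)−x) dx − ∫_𝒮 (S₂(x)−x)(T₂(x)−x) dx| ≤ (s₂−s₁)·(d₁(S₁,S₂) + d₁(T₁,T₂)). -/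
open MeasureTheory ProbabilityTheory Filter Topology

noncomputable section

namespace ATM

variable {Ω : Type*}

lemma transport_bound {s₁ s₂ : ℝ} (hs : s₁ ≤ s₂) {S : ℝ → ℝ} (hS : IsTransport s₁ s₂ S)
    {x : ℝ} (hx : x ∈ Set.Icc s₁ s₂) : |S x - x| ≤ s₂ - s₁ := by
  have h1 := hS.2.1 hx
  rw [abs_sub_le_iff]
  constructor <;> linarith [h1.1, h1.2, hx.1, hx.2]

lemma transport_aemeas {s₁ s₂ : ℝ} {S : ℝ → ℝ} (hS : IsTransport s₁ s₂ S) :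
    AEMeasurable S (volume.restrict (Set.Icc s₁ s₂)) :=
  aemeasurable_restrict_of_monotoneOn measurableSet_Icc hS.1

lemma integrableOn_transport_mul {s₁ s₂ : ℝ} (hs : s₁ ≤ s₂) {S T : ℝ → ℝ}
    (hS : IsTransport s₁ s₂ S) (hT : IsTransport s₁ s₂ T) :
    MeasureTheory.IntegrableOn (fun x => (S x - x) * (T x - x)) (Set.Icc s₁ s₂) := by
  have hm : AEMeasurable (fun x => (S x - x) * (T x - x))
      (volume.restrict (Set.Icc s₁ s₂)) :=
    ((transport_aemeas hS).sub aemeasurable_id).mul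
      ((transport_aemeas hT).sub aemeasurable_id)
  apply MeasureTheory.Integrable.mono'
    (integrable_const ((s₂ - s₁) * (s₂ - s₁))) hm.aestronglyMeasurable
  filter_upwards [ae_restrict_mem measurableSet_Icc] with x hx
  rw [Real.norm_eq_abs, abs_mul]
  exact mul_le_mul (transport_bound hs hS hx) (transport_bound hs hT hx)
    (abs_nonneg _) (by linarith)

lemma integrableOn_transport_absdiff {s₁ s₂ : ℝ} (hs : s₁ ≤ s₂) {S T : ℝ → ℝ}
    (hS : IsTransport s₁ s₂ S) (hT : IsTransport s₁ s₂ T) :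
    MeasureTheory.IntegrableOn (fun x => |S x - T x|) (Set.Icc s₁ s₂) := by
  have hm : AEMeasurable (fun x => |S x - T x|) (volume.restrict (Set.Icc s₁ s₂)) :=
    (Measurable.comp_aemeasurable (continuous_abs.measurable)
      ((transport_aemeas hS).sub (transport_aemeas hT)))
  apply MeasureTheory.Integrable.mono'
    (integrable_const (2 * (s₂ - s₁))) hm.aestronglyMeasurable
  filter_upwards [ae_restrict_mem measurableSet_Icc] with x hx
  rw [Real.norm_eq_abs, abs_abs]
  have h1 := transport_bound hs hS hx
  have h2 := transport_bound hs hT hx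
  have : |S x - T x| ≤ |S x - x| + |T x - x| := by
    have := abs_sub_abs_le_abs_sub (S x - x) (T x - x)
    calc |S x - T x| = |(S x - x) - (T x - x)| := by ring_nf
      _ ≤ |S x - x| + |T x - x| := abs_sub _ _
  linarith

/-- Lipschitz continuity of the autocovariance functional in the transports. -/
theorem autocovariance_functional_lipschitz (s₁ s₂ : ℝ) (hs : s₁ < s₂)
    (S₁ S₂ T₁ T₂ : ℝ → ℝ)
    (hS₁ : IsTransport s₁ s₂ S₁) (hS₂ : IsTransport s₁ s₂ S₂)
    (hT₁ : IsTransport s₁ s₂ T₁) (hT₂ : IsTransport s₁ s₂ T₂) :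
    |(∫ x in s₁..s₂, (S₁ x - x) * (T₁ x - x)) -
        ∫ x in s₁..s₂, (S₂ x - x) * (T₂ x - x)| ≤
      (s₂ - s₁) * (d1 s₁ s₂ S₁ S₂ + d1 s₁ s₂ T₁ T₂) := by
  have hle : s₁ ≤ s₂ := hs.le
  have toII : ∀ f : ℝ → ℝ, MeasureTheory.IntegrableOn f (Set.Icc s₁ s₂) →
      IntervalIntegrable f volume s₁ s₂ := fun f h => by
    rw [intervalIntegrable_iff_integrableOn_Icc_of_le hle]; exact h
  have hI1 := toII _ (integrableOn_transport_mul hle hS₁ hT₁)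
  have hI2 := toII _ (integrableOn_transport_mul hle hS₂ hT₂)
  have hIS := toII _ (integrableOn_transport_absdiff hle hS₁ hS₂)
  have hIT := toII _ (integrableOn_transport_absdiff hle hT₁ hT₂)
  have key : ∀ x ∈ Set.Icc s₁ s₂,
      |(S₁ x - x) * (T₁ x - x) - (S₂ x - x) * (T₂ x - x)| ≤
        (s₂ - s₁) * (|S₁ x - S₂ x| + |T₁ x - T₂ x|) := by
    intro x hx
    have b1 := transport_bound hle hT₁ hx
    have b2 := transport_bound hle hS₂ hx
    have e : (S₁ x - x) * (T₁ x - x) - (S₂ x - x) * (T₂ x - x)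
        = (S₁ x - S₂ x) * (T₁ x - x) + (S₂ x - x) * (T₁ x - T₂ x) := by ring
    rw [e]
    calc |(S₁ x - S₂ x) * (T₁ x - x) + (S₂ x - x) * (T₁ x - T₂ x)|
        ≤ |(S₁ x - S₂ x) * (T₁ x - x)| + |(S₂ x - x) * (T₁ x - T₂ x)| := abs_add_le _ _
      _ = |S₁ x - S₂ x| * |T₁ x - x| + |S₂ x - x| * |T₁ x - T₂ x| := by
          rw [abs_mul, abs_mul]
      _ ≤ |S₁ x - S₂ x| * (s₂ - s₁) + (s₂ - s₁) * |T₁ x - T₂ x| :=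
          add_le_add (mul_le_mul_of_nonneg_left b1 (abs_nonneg _))
            (mul_le_mul_of_nonneg_right b2 (abs_nonneg _))
      _ = (s₂ - s₁) * (|S₁ x - S₂ x| + |T₁ x - T₂ x|) := by ring
  rw [← intervalIntegral.integral_sub hI1 hI2]
  calc |∫ x in s₁..s₂, ((S₁ x - x) * (T₁ x - x) - (S₂ x - x) * (T₂ x - x))|
      ≤ ∫ x in s₁..s₂, |(S₁ x - x) * (T₁ x - x) - (S₂ x - x) * (T₂ x - x)| :=
        intervalIntegral.abs_integral_le_integral_abs hle
    _ ≤ ∫ x in s₁..s₂, (s₂ - s₁) * (|S₁ x - S₂ x| + |T₁ x - T₂ x|) := by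
        apply intervalIntegral.integral_mono_on hle ((hI1.sub hI2).abs)
        · exact ((hIS.add hIT).const_mul _)
        · exact key
    _ = (s₂ - s₁) * (d1 s₁ s₂ S₁ S₂ + d1 s₁ s₂ T₁ T₂) := by
        rw [intervalIntegral.integral_const_mul,
          intervalIntegral.integral_add hIS hIT]
        rfl
end ATM
end
end
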